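/- arXiv:1410.7032 — 3 statements merged into one kernel-verified Lean document; each statement's English description precedes it below -/
import Mathlib

section
/- In the same setting (irreducible P, ratios c_{ij}, positive initial vector), with m_σ = q_{σ_1}p_σ and u_k, l_k as above, define for each word σ of length k the quantity ζ(σ) := m_σ (log m_σ − u_k). If Λ_j is the stopping set {σ : p_{σ^-} ≥ p̲^j > p_σ} and C_1 is the uniform bound on |ξ(i,n) − ξ(j,n)|, then |Σ_{σ ∈ Λ_j} m_σ (log m_σ − u_{|σ|})| ≤ C_1, i.e., Σ_{σ∈Λ_j} m_σ u_{|σ|} − C_1 ≤ Σ_{σ∈Λ_j} m_σ log m_σ ≤ Σ_{σ∈Λ_j} m_σ u_{|σ|} + C_1. -/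
open Finset

/-- Product of transition weights along a word (list of letters). -/
def pword {N : ℕ} (P : Matrix (Fin N) (Fin N) ℝ) (l : List (Fin N)) : ℝ :=
  ((l.zip l.tail).map fun ab => P ab.1 ab.2).prod

/-- Admissible word: nonempty and positive transition weight along consecutive pairs. -/
def adm {N : ℕ} (P : Matrix (Fin N) (Fin N) ℝ) (l : List (Fin N)) : Prop :=
  l ≠ [] ∧ l.Chain' fun a b => 0 < P a b

/-- `m_σ = q_{σ_1} p_σ`. -/
def mlist {N : ℕ} (q : Fin N → ℝ) (P : Matrix (Fin N) (Fin N) ℝ)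
    (l : List (Fin N)) : ℝ :=
  (l.map q).headI * pword P l

/-- `ξ(i,n)`, sum over all words of length `n+1` starting at `i` (convention `0 log 0 = 0`). -/
noncomputable def xi {N : ℕ} (P : Matrix (Fin N) (Fin N) ℝ) (i : Fin N) (n : ℕ) : ℝ :=
  ∑ τ ∈ Finset.univ.filter (fun τ : Fin (n + 1) → Fin N => τ 0 = i),
    (∏ t : Fin n, P (τ t.castSucc) (τ t.succ)) *
      Real.log (∏ t : Fin n, P (τ t.castSucc) (τ t.succ))

/-- Product of the entries of `A` along a word of length `k+1`. -/
noncomputable def wprod {N k : ℕ} (A : Matrix (Fin N) (Fin N) ℝ)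
    (σ : Fin (k + 1) → Fin N) : ℝ :=
  ∏ t : Fin k, A (σ t.castSucc) (σ t.succ)

/-- `u_k = ∑_{σ ∈ G_k} m_σ log m_σ` (convention `0 log 0 = 0`). -/
noncomputable def useq {N : ℕ} (q : Fin N → ℝ) (P : Matrix (Fin N) (Fin N) ℝ)
    (k : ℕ) : ℝ :=
  ∑ σ : Fin (k - 1 + 1) → Fin N,
    (q (σ 0) * wprod P σ) * Real.log (q (σ 0) * wprod P σ)

section Aux

variable {N : ℕ} (P : Matrix (Fin N) (Fin N) ℝ)

lemma wprod_nonneg (hnn : ∀ i j, 0 ≤ P i j) {k : ℕ} (σ : Fin (k+1) → Fin N) :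
    0 ≤ wprod P σ :=
  Finset.prod_nonneg fun _ _ => hnn _ _

lemma entry_le_one (hnn : ∀ i j, 0 ≤ P i j) (hrow : ∀ i, ∑ j, P i j = 1) (i j : Fin N) :
    P i j ≤ 1 := by
  rw [← hrow i]
  exact Finset.single_le_sum (fun x _ => hnn i x) (mem_univ j)

lemma wprod_snoc {m : ℕ} (τ : Fin (m+1) → Fin N) (x : Fin N) :
    wprod P (Fin.snoc τ x) = wprod P τ * P (τ (Fin.last m)) x := by
  unfold wprod
  rw [Fin.prod_univ_castSucc]
  congr 1
  · apply Finset.prod_congr rfl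
    intro t _
    rw [Fin.succ_castSucc]
    rw [Fin.snoc_castSucc, Fin.snoc_castSucc]
  · rw [Fin.succ_last, Fin.snoc_castSucc, Fin.snoc_last]

lemma mul_log_mul {y p : ℝ} (hy : 0 ≤ y) (hp : 0 ≤ p) :
    (y * p) * Real.log (y * p) = (y * Real.log y) * p + y * (p * Real.log p) := by
  rcases eq_or_lt_of_le hy with h | h
  · simp [← h]
  rcases eq_or_lt_of_le hp with h' | h'
  · simp [← h']
  rw [Real.log_mul h.ne' h'.ne']
  ring

lemma sum_snoc_filter {m : ℕ} (Q : (Fin (m+1) → Fin N) → Prop) [DecidablePred Q]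
    (f : (Fin (m+2) → Fin N) → ℝ) :
    ∑ τ ∈ Finset.univ.filter (fun τ => Q (Fin.init τ)), f τ
      = ∑ τ ∈ Finset.univ.filter Q, ∑ x, f (Fin.snoc τ x) := by
  rw [Finset.sum_sigma']
  refine (Finset.sum_bij
    (fun (p : Σ _ : Fin (m+1) → Fin N, Fin N) (_ : p ∈ (Finset.univ.filter Q).sigma fun _ => Finset.univ) => Fin.snoc p.1 p.2) ?_ ?_ ?_ ?_).symm
  · rintro ⟨τ, x⟩ hp
    simp only [Finset.mem_sigma, Finset.mem_filter, Finset.mem_univ, true_and] at hp ⊢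
    rw [Fin.init_snoc]
    exact hp.1
  · rintro ⟨τ, x⟩ hp ⟨τ', x'⟩ hp' h
    simp only at h
    have h1 : τ = τ' := by
      have := congrArg (fun g => Fin.init g) h
      simpa [Fin.init_snoc] using this
    have h2 : x = x' := by
      have := congrArg (fun g => g (Fin.last (m+1))) h
      simpa [Fin.snoc_last] using this
    subst h1; subst h2; rfl
  · intro τ' hτ'
    simp only [Finset.mem_filter, Finset.mem_univ, true_and] at hτ'
    refine ⟨⟨Fin.init τ', τ' (Fin.last _)⟩, ?_, ?_⟩
    · simp only [Finset.mem_sigma, Finset.mem_filter, Finset.mem_univ, true_and]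
      exact ⟨hτ', trivial⟩
    · exact Fin.snoc_init_self τ'
  · intros; rfl

end Aux
noncomputable def Wv {N : ℕ} (P : Matrix (Fin N) (Fin N) ℝ) (i : Fin N) (n : ℕ)
    (v : Fin N → ℝ) : ℝ :=
  ∑ e ∈ Finset.univ.filter (fun e : Fin (n+1) → Fin N => e 0 = i),
    wprod P e * v (e (Fin.last n))

section Aux2

variable {N : ℕ} (P : Matrix (Fin N) (Fin N) ℝ)

lemma filter_start_singleton (i : Fin N) :
    Finset.univ.filter (fun e : Fin 1 → Fin N => e 0 = i) = {fun _ => i} := by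
  ext e
  simp only [Finset.mem_filter, Finset.mem_univ, true_and, Finset.mem_singleton]
  constructor
  · intro h; funext t; rw [Subsingleton.elim t 0]; exact h
  · intro h; rw [h]

lemma Wv_zero (i : Fin N) (v : Fin N → ℝ) : Wv P i 0 v = v i := by
  rw [Wv, filter_start_singleton, Finset.sum_singleton]
  simp [wprod]

lemma Wv_succ (i : Fin N) (n : ℕ) (v : Fin N → ℝ) :
    Wv P i (n+1) v = Wv P i n (fun a => ∑ x, P a x * v x) := by
  rw [Wv, Wv]
  have hcond : ∀ e : Fin (n+2) → Fin N, (e 0 = i) ↔ (Fin.init e 0 = i) := by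
    intro e
    rw [show (Fin.init e 0) = e 0 from by rw [Fin.init]; congr 1
    ]
  rw [Finset.filter_congr (fun e _ => by rw [hcond e])]
  rw [sum_snoc_filter (fun e : Fin (n+1) → Fin N => e 0 = i)
    (fun τ => wprod P τ * v (τ (Fin.last (n+1))))]
  apply Finset.sum_congr rfl
  intro e _
  rw [Finset.mul_sum]
  apply Finset.sum_congr rfl
  intro x _
  rw [wprod_snoc, Fin.snoc_last]
  ring

lemma Wv_one (hrow : ∀ i, ∑ j, P i j = 1) (i : Fin N) (n : ℕ) :
    Wv P i n (fun _ => 1) = 1 := by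
  induction n generalizing i with
  | zero => rw [Wv_zero]
  | succ n ih =>
      rw [Wv_succ]
      have : (fun a => ∑ x, P a x * (1:ℝ)) = fun _ => (1:ℝ) := by
        funext a; simp [hrow a]
      rw [this, ih]

lemma xi_eq (i : Fin N) (n : ℕ) :
    xi P i n = ∑ e ∈ Finset.univ.filter (fun e : Fin (n+1) → Fin N => e 0 = i),
      wprod P e * Real.log (wprod P e) := rfl

lemma xi_zero (i : Fin N) : xi P i 0 = 0 := by
  rw [xi_eq, filter_start_singleton, Finset.sum_singleton]
  simp [wprod]

lemma xi_succ (hnn : ∀ i j, 0 ≤ P i j) (hrow : ∀ i, ∑ j, P i j = 1) (i : Fin N) (n : ℕ) :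
    xi P i (n+1) = xi P i n + Wv P i n (fun a => ∑ x, P a x * Real.log (P a x)) := by
  rw [xi_eq, xi_eq, Wv]
  have hcond : ∀ e : Fin (n+2) → Fin N, (e 0 = i) ↔ (Fin.init e 0 = i) := by
    intro e
    rw [show (Fin.init e 0) = e 0 from by rw [Fin.init]; congr 1]
  rw [Finset.filter_congr (fun e _ => by rw [hcond e])]
  rw [sum_snoc_filter (fun e : Fin (n+1) → Fin N => e 0 = i)
    (fun τ => wprod P τ * Real.log (wprod P τ))]
  rw [← Finset.sum_add_distrib]
  apply Finset.sum_congr rfl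
  intro e _
  have hterm : ∀ x, wprod P (Fin.snoc e x) * Real.log (wprod P (Fin.snoc e x))
      = (wprod P e * Real.log (wprod P e)) * P (e (Fin.last n)) x
        + wprod P e * (P (e (Fin.last n)) x * Real.log (P (e (Fin.last n)) x)) := by
    intro x
    rw [wprod_snoc]
    exact mul_log_mul (wprod_nonneg P hnn e) (hnn _ _)
  calc ∑ x, wprod P (Fin.snoc e x) * Real.log (wprod P (Fin.snoc e x))
      = ∑ x, ((wprod P e * Real.log (wprod P e)) * P (e (Fin.last n)) x
        + wprod P e * (P (e (Fin.last n)) x * Real.log (P (e (Fin.last n)) x))) :=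
        Finset.sum_congr rfl (fun x _ => hterm x)
    _ = (wprod P e * Real.log (wprod P e)) * (∑ x, P (e (Fin.last n)) x)
        + wprod P e * ∑ x, P (e (Fin.last n)) x * Real.log (P (e (Fin.last n)) x) := by
        rw [Finset.sum_add_distrib, ← Finset.mul_sum, ← Finset.mul_sum]
    _ = wprod P e * Real.log (wprod P e)
        + wprod P e * ∑ x, P (e (Fin.last n)) x * Real.log (P (e (Fin.last n)) x) := by
        rw [hrow, mul_one]

end Aux2
def Eset {N : ℕ} (k m : ℕ) (h : k ≤ m) (σ : Fin (k+1) → Fin N) :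
    Finset (Fin (m+1) → Fin N) :=
  Finset.univ.filter (fun τ => ∀ i : Fin (k+1), τ (Fin.castLE (by omega) i) = σ i)

section Aux3

variable {N : ℕ} (P : Matrix (Fin N) (Fin N) ℝ)

lemma Eset_self (k : ℕ) (σ : Fin (k+1) → Fin N) : Eset k k le_rfl σ = {σ} := by
  ext τ
  simp only [Eset, Finset.mem_filter, Finset.mem_univ, true_and, Finset.mem_singleton]
  constructor
  · intro h; funext i
    have := h i
    rwa [show Fin.castLE (by omega : k+1 ≤ k+1) i = i from Fin.ext rfl] at this
  · intro h i; subst h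
    rw [show Fin.castLE (by omega : k+1 ≤ k+1) i = i from Fin.ext rfl]

lemma Eset_succ_mem (k m : ℕ) (h : k ≤ m) (σ : Fin (k+1) → Fin N)
    (τ : Fin (m+2) → Fin N) :
    (∀ i : Fin (k+1), τ (Fin.castLE (by omega) i) = σ i)
      ↔ (∀ i : Fin (k+1), (Fin.init τ) (Fin.castLE (by omega) i) = σ i) := by
  apply forall_congr'
  intro i
  have : Fin.init τ (Fin.castLE (by omega) i) = τ (Fin.castLE (by omega) i) := by
    rw [Fin.init]
    congr 1
  rw [this]

lemma Eset_succ_eq (k m : ℕ) (hkm : k ≤ m) (σ : Fin (k+1) → Fin N) :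
    Eset k (m+1) (Nat.le_succ_of_le hkm) σ
      = Finset.univ.filter (fun τ : Fin (m+2) → Fin N =>
          ∀ i : Fin (k+1), (Fin.init τ) (Fin.castLE (Nat.succ_le_succ hkm) i) = σ i) := by
  rw [Eset]
  apply Finset.filter_congr
  intro τ _
  simpa using (Eset_succ_mem (N := N) k m hkm σ τ)

lemma Eset_split (k m : ℕ) (hkm : k ≤ m) (σ : Fin (k+1) → Fin N)
    (F : (Fin (m+2) → Fin N) → ℝ) :
    ∑ τ ∈ Eset k (m+1) (Nat.le_succ_of_le hkm) σ, F τ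
      = ∑ τ ∈ Eset k m hkm σ, ∑ x, F (Fin.snoc τ x) := by
  rw [Eset_succ_eq k m hkm σ]
  exact sum_snoc_filter (fun τ : Fin (m+1) → Fin N =>
    ∀ i : Fin (k+1), τ (Fin.castLE (Nat.succ_le_succ hkm) i) = σ i) F

lemma ML_v (k : ℕ) (σ : Fin (k+1) → Fin N) :
    ∀ m (h : k ≤ m) (v : Fin N → ℝ),
      ∑ τ ∈ Eset k m h σ, wprod P τ * v (τ (Fin.last m))
        = wprod P σ * Wv P (σ (Fin.last k)) (m - k) v := by
  intro m h v
  induction m, h using Nat.le_induction generalizing v with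
  | base =>
      rw [Eset_self, Finset.sum_singleton, Nat.sub_self, Wv_zero]
  | succ m hkm ih =>
      rw [Eset_split (N := N) k m hkm σ
        (fun τ : Fin (m+2) → Fin N => wprod P τ * v (τ (Fin.last (m+1))))]
      have hin : ∀ τ : Fin (m+1) → Fin N,
          (∑ x, wprod P (Fin.snoc τ x) * v ((Fin.snoc τ x : Fin (m+2) → Fin N) (Fin.last (m+1))))
            = wprod P τ * ∑ x, P (τ (Fin.last m)) x * v x := by
        intro τ
        rw [Finset.mul_sum]
        apply Finset.sum_congr rfl
        intro x _
        rw [wprod_snoc, Fin.snoc_last]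
        ring
      rw [Finset.sum_congr rfl (fun τ _ => hin τ)]
      rw [ih (fun a => ∑ x, P a x * v x)]
      rw [show m + 1 - k = (m - k) + 1 by omega, Wv_succ]

lemma ML_mass (hrow : ∀ i, ∑ j, P i j = 1) (k : ℕ) (σ : Fin (k+1) → Fin N)
    (m : ℕ) (h : k ≤ m) :
    ∑ τ ∈ Eset k m h σ, wprod P τ = wprod P σ := by
  have := ML_v P k σ m h (fun _ => 1)
  rw [Wv_one P hrow] at this
  simpa using this

lemma ML_ent (hnn : ∀ i j, 0 ≤ P i j) (hrow : ∀ i, ∑ j, P i j = 1)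
    (k : ℕ) (σ : Fin (k+1) → Fin N) (c : ℝ) (hc : 0 ≤ c) :
    ∀ m (h : k ≤ m),
      ∑ τ ∈ Eset k m h σ, (c * wprod P τ) * Real.log (c * wprod P τ)
        = (c * wprod P σ) * Real.log (c * wprod P σ)
          + c * wprod P σ * xi P (σ (Fin.last k)) (m - k) := by
  intro m h
  induction m, h using Nat.le_induction with
  | base =>
      rw [Eset_self, Finset.sum_singleton, Nat.sub_self, xi_zero, mul_zero, add_zero]
  | succ m hkm ih =>
      rw [Eset_split (N := N) k m hkm σ
        (fun τ : Fin (m+2) → Fin N => (c * wprod P τ) * Real.log (c * wprod P τ))]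
      have key : ∀ τ : Fin (m+1) → Fin N,
          ∑ x, (c * wprod P (Fin.snoc τ x)) * Real.log (c * wprod P (Fin.snoc τ x))
            = (c * wprod P τ) * Real.log (c * wprod P τ)
              + wprod P τ * (c * ∑ x, P (τ (Fin.last m)) x
                  * Real.log (P (τ (Fin.last m)) x)) := by
        intro τ
        have hterm : ∀ x, (c * wprod P (Fin.snoc τ x)) * Real.log (c * wprod P (Fin.snoc τ x))
            = ((c * wprod P τ) * Real.log (c * wprod P τ)) * P (τ (Fin.last m)) x
              + (c * wprod P τ) * (P (τ (Fin.last m)) x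
                  * Real.log (P (τ (Fin.last m)) x)) := by
          intro x
          rw [wprod_snoc, ← mul_assoc]
          exact mul_log_mul (mul_nonneg hc (wprod_nonneg P hnn τ)) (hnn _ _)
        rw [Finset.sum_congr rfl (fun x _ => hterm x), Finset.sum_add_distrib,
          ← Finset.mul_sum, ← Finset.mul_sum, hrow, mul_one]
        ring
      rw [Finset.sum_congr rfl (fun τ _ => key τ), Finset.sum_add_distrib]
      rw [ih]
      have hmlv : ∑ τ ∈ Eset k m hkm σ, wprod P τ * (c * ∑ x, P (τ (Fin.last m)) x
          * Real.log (P (τ (Fin.last m)) x))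
          = c * (wprod P σ * Wv P (σ (Fin.last k)) (m - k)
              (fun a => ∑ x, P a x * Real.log (P a x))) := by
        rw [← ML_v P k σ m hkm (fun a => ∑ x, P a x * Real.log (P a x)), Finset.mul_sum]
        apply Finset.sum_congr rfl
        intro τ _
        ring
      rw [hmlv, show m + 1 - k = (m - k) + 1 by omega, xi_succ P hnn hrow]
      ring

end Aux3
section Aux4

variable {N : ℕ} (P : Matrix (Fin N) (Fin N) ℝ) (q : Fin N → ℝ)

lemma sum_snoc_univ {m : ℕ} (f : (Fin (m+2) → Fin N) → ℝ) :
    ∑ τ : Fin (m+2) → Fin N, f τ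
      = ∑ τ : Fin (m+1) → Fin N, ∑ x, f (Fin.snoc τ x) := by
  have := sum_snoc_filter (N := N) (fun _ : Fin (m+1) → Fin N => True) f
  simpa using this

lemma snoc_zero {k : ℕ} (τ : Fin (k+1) → Fin N) (x : Fin N) :
    (Fin.snoc τ x : Fin (k+2) → Fin N) 0 = τ 0 := by
  rw [← Fin.castSucc_zero, Fin.snoc_castSucc]

lemma wprod_one (σ : Fin 1 → Fin N) : wprod P σ = 1 := by
  simp [wprod]

lemma mass_level (hrow : ∀ i, ∑ j, P i j = 1) (hq1 : ∑ i, q i = 1) (k : ℕ) :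
    ∑ σ : Fin (k+1) → Fin N, q (σ 0) * wprod P σ = 1 := by
  induction k with
  | zero =>
      have h1 : ∀ σ : Fin 1 → Fin N, q (σ 0) * wprod P σ = q (σ 0) := by
        intro σ; rw [wprod_one, mul_one]
      rw [Finset.sum_congr rfl (fun σ _ => h1 σ)]
      rw [← hq1]
      exact Fintype.sum_equiv (Equiv.funUnique (Fin 1) (Fin N)) _ q (fun σ => rfl)
  | succ k ih =>
      rw [sum_snoc_univ (fun τ : Fin (k+2) → Fin N => q (τ 0) * wprod P τ)]
      rw [← ih]
      apply Finset.sum_congr rfl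
      intro τ _
      calc ∑ x, q ((Fin.snoc τ x : Fin (k+2) → Fin N) 0) * wprod P (Fin.snoc τ x)
          = ∑ x, q (τ 0) * (wprod P τ * P (τ (Fin.last k)) x) := by
            apply Finset.sum_congr rfl
            intro x _
            rw [snoc_zero, wprod_snoc]
        _ = q (τ 0) * wprod P τ * ∑ x, P (τ (Fin.last k)) x := by
            rw [Finset.mul_sum]
            apply Finset.sum_congr rfl
            intro x _
            ring
        _ = q (τ 0) * wprod P τ := by rw [hrow, mul_one]

lemma level_partition (k m : ℕ) (h : k ≤ m) (f : (Fin (m+1) → Fin N) → ℝ) :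
    ∑ τ : Fin (m+1) → Fin N, f τ
      = ∑ σ : Fin (k+1) → Fin N, ∑ τ ∈ Eset k m h σ, f τ := by
  rw [← Finset.sum_fiberwise Finset.univ
    (fun τ : Fin (m+1) → Fin N => fun i : Fin (k+1) => τ (Fin.castLE (by omega) i)) f]
  apply Finset.sum_congr rfl
  intro σ _
  apply Finset.sum_congr _ (fun _ _ => rfl)
  ext τ
  simp only [Finset.mem_filter, Finset.mem_univ, true_and, Eset]
  rw [funext_iff]

lemma castLE_zero' (k m : ℕ) (h : k + 1 ≤ m + 1) :
    Fin.castLE h (0 : Fin (k+1)) = (0 : Fin (m+1)) := Fin.ext rfl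

lemma U_split (hnn : ∀ i j, 0 ≤ P i j) (hrow : ∀ i, ∑ j, P i j = 1)
    (hq : ∀ i, 0 < q i) (k m : ℕ) (h : k ≤ m) :
    ∑ τ : Fin (m+1) → Fin N, (q (τ 0) * wprod P τ) * Real.log (q (τ 0) * wprod P τ)
      = ∑ σ : Fin (k+1) → Fin N,
          ((q (σ 0) * wprod P σ) * Real.log (q (σ 0) * wprod P σ)
            + q (σ 0) * wprod P σ * xi P (σ (Fin.last k)) (m - k)) := by
  rw [level_partition (N := N) k m h]
  apply Finset.sum_congr rfl
  intro σ _
  have hτ0 : ∀ τ ∈ Eset k m h σ, τ 0 = σ 0 := by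
    intro τ hτ
    simp only [Eset, Finset.mem_filter, Finset.mem_univ, true_and] at hτ
    have := hτ 0
    rwa [castLE_zero' k m (by omega)] at this
  rw [Finset.sum_congr rfl (fun τ hτ => by rw [hτ0 τ hτ])]
  exact ML_ent P hnn hrow k σ (q (σ 0)) (le_of_lt (hq _)) m h

end Aux4
section Aux5

variable {N : ℕ} (P : Matrix (Fin N) (Fin N) ℝ)

lemma row_det (hnn : ∀ i j, 0 ≤ P i j) (hrow : ∀ i, ∑ j, P i j = 1)
    {i j : Fin N} (h1 : P i j = 1) {x : Fin N} (hx : x ≠ j) : P i x = 0 := by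
  have hsum := hrow i
  rw [← Finset.add_sum_erase Finset.univ (P i) (Finset.mem_univ j), h1] at hsum
  have h0 : ∑ y ∈ Finset.univ.erase j, P i y = 0 := by linarith
  exact (Finset.sum_eq_zero_iff_of_nonneg (fun y _ => hnn i y)).1 h0 x
    (Finset.mem_erase.2 ⟨hx, Finset.mem_univ x⟩)

lemma pow_entry_nonneg (hnn : ∀ i j, 0 ≤ P i j) :
    ∀ m i j, 0 ≤ (P ^ m) i j := by
  intro m
  induction m with
  | zero => intro i j; by_cases h : i = j <;> simp [Matrix.one_apply, h]
  | succ m ih =>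
      intro i j
      rw [pow_succ, Matrix.mul_apply]
      exact Finset.sum_nonneg fun x _ => mul_nonneg (ih i x) (hnn x j)

lemma all_one_of_one_cycle (hnn : ∀ i j, 0 ≤ P i j) (hrow : ∀ i, ∑ j, P i j = 1)
    (hirr : ∀ i j, ∃ m, 1 ≤ m ∧ 0 < (P ^ m) i j)
    (c : ℕ → Fin N) (r : ℕ) (hr : 1 ≤ r) (hcy : c r = c 0)
    (h1 : ∀ t < r, P (c t) (c (t+1)) = 1) :
    ∀ a b, 0 < P a b → P a b = 1 := by
  set inC : Fin N → Prop := fun b => ∃ t, t < r ∧ c t = b with hinC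
  have closure1 : ∀ b x, inC b → 0 < P b x → inC x := by
    rintro b x ⟨t, ht, rfl⟩ hpos
    have h1t := h1 t ht
    by_cases hx : x = c (t+1)
    · subst hx
      rcases Nat.lt_or_ge (t+1) r with h | h
      · exact ⟨t+1, h, rfl⟩
      · have heq : t + 1 = r := by omega
        refine ⟨0, by omega, ?_⟩
        rw [← hcy, heq]
    · exact absurd (row_det P hnn hrow h1t hx) (ne_of_gt hpos)
  have closurem : ∀ m b x, inC b → 0 < (P ^ m) b x → inC x := by
    intro m
    induction m with
    | zero =>
        intro b x hb hpos
        by_cases h : b = x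
        · exact h ▸ hb
        · simp [Matrix.one_apply, h] at hpos
    | succ m ih =>
        intro b x hb hpos
        rw [pow_succ, Matrix.mul_apply] at hpos
        have : ∃ y, 0 < (P ^ m) b y * P y x := by
          by_contra hcon
          push_neg at hcon
          have : ∑ y, (P ^ m) b y * P y x ≤ 0 := Finset.sum_nonpos fun y _ => hcon y
          linarith
        obtain ⟨y, hy⟩ := this
        have hy1 : 0 < (P ^ m) b y := by
          rcases (pow_entry_nonneg P hnn m b y).lt_or_eq with h | h
          · exact h
          · rw [← h] at hy; simp at hy
        have hy2 : 0 < P y x := by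
          rcases (hnn y x).lt_or_eq with h | h
          · exact h
          · rw [← h] at hy; simp at hy
        exact closure1 y x (ih b y hb hy1) hy2
  intro a b hab
  have hC : ∀ x, inC x := by
    intro x
    obtain ⟨m, _, hpos⟩ := hirr (c 0) x
    exact closurem m (c 0) x ⟨0, by omega, rfl⟩ hpos
  obtain ⟨t, ht, rfl⟩ := hC a
  by_cases hb : b = c (t+1)
  · rw [hb]; exact h1 t ht
  · exact absurd (row_det P hnn hrow (h1 t ht) hb) (ne_of_gt hab)

lemma window_le (hnn : ∀ i j, 0 ≤ P i j) (hrow : ∀ i, ∑ j, P i j = 1)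
    (hirr : ∀ i j, ∃ m, 1 ≤ m ∧ 0 < (P ^ m) i j)
    (hB : ∃ a b, 0 < P a b ∧ P a b < 1)
    (θ : ℝ) (hθub : ∀ a b, 0 < P a b → P a b < 1 → P a b ≤ θ)
    (e : ℕ → Fin N) (s m : ℕ) (hsm : s + (N+1) ≤ m)
    (hpos : ∀ t < m, 0 < P (e t) (e (t+1))) :
    ∏ t ∈ Finset.range (N+1), P (e (s+t)) (e (s+t+1)) ≤ θ := by
  obtain ⟨p, qq, hne, heq⟩ := Fintype.exists_ne_map_eq_of_card_lt
    (fun i : Fin (N+2) => e (s + i)) (by simp)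
  have hpq : ∃ pn qn : ℕ, pn < qn ∧ qn ≤ N+1 ∧ e (s+pn) = e (s+qn) := by
    rcases lt_trichotomy (p : ℕ) (qq : ℕ) with h | h | h
    · exact ⟨p, qq, h, by omega, heq⟩
    · exact absurd (Fin.ext h) hne
    · exact ⟨qq, p, h, by omega, heq.symm⟩
  obtain ⟨pn, qn, hlt, hqn, hcyc⟩ := hpq
  set c : ℕ → Fin N := fun u => e (s + pn + u) with hc
  set r : ℕ := qn - pn with hrdef
  have hr : 1 ≤ r := by omega
  have hcy : c r = c 0 := by
    show e (s + pn + (qn - pn)) = e (s + pn + 0)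
    rw [show s + pn + (qn - pn) = s + qn by omega, show s + pn + 0 = s + pn by omega]
    exact hcyc.symm
  by_cases hall : ∀ u < r, P (c u) (c (u+1)) = 1
  · exfalso
    obtain ⟨a, b, hab, hab1⟩ := hB
    have := all_one_of_one_cycle P hnn hrow hirr c r hr hcy hall a b hab
    linarith
  · push_neg at hall
    obtain ⟨u, hur, hune⟩ := hall
    set t₀ : ℕ := pn + u with ht₀
    have ht₀mem : t₀ ∈ Finset.range (N+1) := by
      simp only [Finset.mem_range]
      omega
    have ht₀lt : s + t₀ + 1 ≤ m := by omega
    have hfpos : 0 < P (e (s+t₀)) (e (s+t₀+1)) := hpos _ (by omega)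
    have hfle : P (e (s+t₀)) (e (s+t₀+1)) ≤ θ := by
      apply hθub _ _ hfpos
      have h1 : P (e (s+t₀)) (e (s+t₀+1)) ≤ 1 := entry_le_one P hnn hrow _ _
      rcases h1.lt_or_eq with h | h
      · exact h
      · exfalso
        apply hune
        show P (e (s + pn + u)) (e (s + pn + (u+1))) = 1
        rw [show s + pn + u = s + t₀ by omega, show s + pn + (u+1) = s + t₀ + 1 by omega]
        exact h
    have hθ0 : 0 ≤ θ := le_trans (le_of_lt hfpos) hfle
    rw [← Finset.mul_prod_erase _ _ ht₀mem]
    calc P (e (s+t₀)) (e (s+t₀+1)) * ∏ t ∈ (Finset.range (N+1)).erase t₀,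
          P (e (s+t)) (e (s+t+1))
        ≤ θ * 1 := by
          apply mul_le_mul hfle
          · exact Finset.prod_le_one (fun t _ => hnn _ _)
              (fun t _ => entry_le_one P hnn hrow _ _)
          · exact Finset.prod_nonneg fun t _ => hnn _ _
          · exact hθ0
      _ = θ := mul_one θ

end Aux5
section Aux6

variable {N : ℕ} (P : Matrix (Fin N) (Fin N) ℝ)

lemma blocks_le (hnn : ∀ i j, 0 ≤ P i j) (hrow : ∀ i, ∑ j, P i j = 1)
    (hirr : ∀ i j, ∃ m, 1 ≤ m ∧ 0 < (P ^ m) i j)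
    (hB : ∃ a b, 0 < P a b ∧ P a b < 1)
    (θ : ℝ) (hθ0 : 0 ≤ θ) (hθub : ∀ a b, 0 < P a b → P a b < 1 → P a b ≤ θ)
    (e : ℕ → Fin N) (m : ℕ) (hpos : ∀ t < m, 0 < P (e t) (e (t+1))) :
    ∀ d, d * (N+1) ≤ m →
      ∏ t ∈ Finset.range (d*(N+1)), P (e t) (e (t+1)) ≤ θ ^ d := by
  intro d
  induction d with
  | zero => intro _; simp
  | succ d ih =>
      intro hd
      have h1 : d * (N+1) ≤ m := by
        have : d * (N+1) ≤ (d+1) * (N+1) := by nlinarith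
        omega
      have hsplit : (d+1)*(N+1) = d*(N+1) + (N+1) := by ring
      rw [hsplit, Finset.prod_range_add]
      have hw : ∏ t ∈ Finset.range (N+1), P (e (d*(N+1)+t)) (e (d*(N+1)+t+1)) ≤ θ := by
        have := window_le P hnn hrow hirr hB θ hθub e (d*(N+1)) m (by omega) hpos
        convert this using 2 with t
      rw [pow_succ]
      apply mul_le_mul (ih h1) hw (Finset.prod_nonneg fun t _ => hnn _ _) (pow_nonneg hθ0 d)

lemma path_decay (hnn : ∀ i j, 0 ≤ P i j) (hrow : ∀ i, ∑ j, P i j = 1)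
    (hirr : ∀ i j, ∃ m, 1 ≤ m ∧ 0 < (P ^ m) i j)
    (hB : ∃ a b, 0 < P a b ∧ P a b < 1)
    (θ : ℝ) (hθ0 : 0 ≤ θ) (hθub : ∀ a b, 0 < P a b → P a b < 1 → P a b ≤ θ)
    (e : ℕ → Fin N) (m : ℕ) (hpos : ∀ t < m, 0 < P (e t) (e (t+1))) :
    ∏ t ∈ Finset.range m, P (e t) (e (t+1)) ≤ θ ^ (m / (N+1)) := by
  set d := m / (N+1) with hd
  have hdm : d * (N+1) ≤ m := Nat.div_mul_le_self m (N+1)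
  rw [← Finset.prod_range_mul_prod_Ico (fun t => P (e t) (e (t+1))) hdm]
  calc (∏ t ∈ Finset.range (d*(N+1)), P (e t) (e (t+1)))
        * ∏ t ∈ Finset.Ico (d*(N+1)) m, P (e t) (e (t+1))
      ≤ θ ^ d * 1 := by
        apply mul_le_mul
        · exact blocks_le P hnn hrow hirr hB θ hθ0 hθub e m hpos d hdm
        · exact Finset.prod_le_one (fun t _ => hnn _ _)
            (fun t _ => entry_le_one P hnn hrow _ _)
        · exact Finset.prod_nonneg fun t _ => hnn _ _
        · exact pow_nonneg hθ0 d
    _ = θ ^ d := mul_one _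

end Aux6
section Aux7

variable {N : ℕ} (P : Matrix (Fin N) (Fin N) ℝ) (q : Fin N → ℝ)

lemma pword_cons (a b : Fin N) (t : List (Fin N)) :
    pword P (a :: b :: t) = P a b * pword P (b :: t) := by
  simp only [pword, List.tail_cons, List.zip_cons_cons, List.map_cons, List.prod_cons]

lemma pword_ofFn : ∀ (s : ℕ) (g : Fin (s+1) → Fin N),
    pword P (List.ofFn g) = wprod P g := by
  intro s
  induction s with
  | zero =>
      intro g
      simp [List.ofFn_succ, pword, wprod]
  | succ s ih =>
      intro g
      rw [List.ofFn_succ (f := g), List.ofFn_succ (f := fun i : Fin (s+1) => g i.succ)]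
      rw [pword_cons]
      rw [← List.ofFn_succ (f := fun i : Fin (s+1) => g i.succ)]
      rw [ih (fun i : Fin (s+1) => g i.succ)]
      conv_rhs => rw [wprod, Fin.prod_univ_succ]
      congr 1
      all_goals
        first
        | rfl
        | (congr 2; exact congrArg g (Fin.ext rfl))
        | (rw [wprod]
           apply Finset.prod_congr rfl
           intro t _
           congr 1 <;> exact congrArg g (Fin.ext rfl))

lemma mlist_ofFn (s : ℕ) (g : Fin (s+1) → Fin N) :
    mlist q P (List.ofFn g) = q (g 0) * wprod P g := by
  rw [mlist, ← pword_ofFn P s g]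
  congr 1
  rw [List.ofFn_succ (f := g)]
  simp

lemma dropLast_ofFn (s : ℕ) (g : Fin (s+2) → Fin N) :
    (List.ofFn g).dropLast = List.ofFn (fun i : Fin (s+1) => g i.castSucc) := by
  rw [List.ofFn_succ' g, List.concat_eq_append, List.dropLast_concat]

lemma adm_ofFn_iff (s : ℕ) (g : Fin (s+1) → Fin N) :
    adm P (List.ofFn g) ↔ ∀ t : Fin s, 0 < P (g t.castSucc) (g t.succ) := by
  constructor
  · rintro ⟨-, hch⟩ t
    change List.IsChain (fun a b => 0 < P a b) _ at hch
    rw [List.isChain_ofFn] at hch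
    have := hch t.1 (by omega)
    convert this using 2 <;> exact congrArg g (Fin.ext rfl)
  · intro h
    refine ⟨by simp [← List.length_pos_iff_ne_nil], ?_⟩
    change List.IsChain (fun a b => 0 < P a b) _
    rw [List.isChain_ofFn]
    intro i hi
    have := h ⟨i, by omega⟩
    convert this using 2 <;> exact congrArg g (Fin.ext rfl)

end Aux7
/-- canonical word of length `n+1` read off an `ℕ`-indexed path -/
def Lword {N : ℕ} (n : ℕ) (f : ℕ → Fin N) : List (Fin N) :=
  List.ofFn (fun i : Fin (n+1) => f i.val)

/-- weight of the first `r` steps of an `ℕ`-indexed path -/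
noncomputable def pwn {N : ℕ} (P : Matrix (Fin N) (Fin N) ℝ) (f : ℕ → Fin N) (r : ℕ) : ℝ :=
  ∏ t ∈ Finset.range r, P (f t) (f (t+1))

section Aux8

variable {N : ℕ} (P : Matrix (Fin N) (Fin N) ℝ) (q : Fin N → ℝ)

lemma Lword_length (n : ℕ) (f : ℕ → Fin N) : (Lword n f).length = n + 1 := by
  simp [Lword]

lemma Lword_ne_nil (n : ℕ) (f : ℕ → Fin N) : Lword n f ≠ [] := by
  simp [← List.length_pos_iff_ne_nil, Lword_length]

lemma Lword_get (n : ℕ) (f : ℕ → Fin N) (i : Fin (Lword n f).length) :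
    (Lword n f).get i = f i.val :=
  List.get_ofFn _ i

lemma wprod_eq_pwn (n : ℕ) (g : Fin (n+1) → Fin N) (f : ℕ → Fin N)
    (h : ∀ (t : ℕ) (ht : t ≤ n), g ⟨t, by omega⟩ = f t) :
    wprod P g = pwn P f n := by
  rw [wprod, pwn]
  rw [← Fin.prod_univ_eq_prod_range (fun t => P (f t) (f (t+1))) n]
  apply Finset.prod_congr rfl
  intro t _
  congr 1
  · rw [show t.castSucc = (⟨t.1, Nat.lt_succ_of_lt t.2⟩ : Fin (n+1)) from Fin.ext rfl]
    exact h t.1 (by omega)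
  · rw [show t.succ = (⟨t.1+1, Nat.succ_lt_succ t.2⟩ : Fin (n+1)) from Fin.ext rfl]
    exact h (t.1+1) (by omega)

lemma pword_Lword (n : ℕ) (f : ℕ → Fin N) : pword P (Lword n f) = pwn P f n := by
  rw [Lword, pword_ofFn]
  exact wprod_eq_pwn P n _ f (fun t _ => rfl)

lemma dropLast_Lword (s : ℕ) (f : ℕ → Fin N) :
    (Lword (s+1) f).dropLast = Lword s f := by
  rw [Lword, dropLast_ofFn]
  rfl

lemma adm_Lword_iff (n : ℕ) (f : ℕ → Fin N) :
    adm P (Lword n f) ↔ ∀ t < n, 0 < P (f t) (f (t+1)) := by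
  rw [Lword, adm_ofFn_iff]
  constructor
  · intro h t ht
    have := h ⟨t, ht⟩
    simpa using this
  · intro h t
    have := h t.1 t.2
    simpa using this

lemma mlist_Lword (n : ℕ) (f : ℕ → Fin N) :
    mlist q P (Lword n f) = q (f 0) * pwn P f n := by
  rw [Lword, mlist_ofFn]
  rw [wprod_eq_pwn P n _ f (fun t _ => rfl)]
  norm_num

lemma eq_Lword (l : List (Fin N)) (hl : l ≠ []) (d : Fin N) :
    l = Lword (l.length - 1) (fun t => l.getD t d) := by
  have hlen : l.length - 1 + 1 = l.length := by
    have : 0 < l.length := List.length_pos_of_ne_nil hl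
    omega
  apply List.ext_get
  · rw [Lword_length, hlen]
  · intro i h1 h2
    rw [Lword_get]
    rw [List.getD_eq_getElem l d (by omega)]; rfl

lemma Lword_getD (n : ℕ) (f : ℕ → Fin N) (t : ℕ) (d : Fin N) (ht : t ≤ n) :
    (Lword n f).getD t d = f t := by
  rw [List.getD_eq_getElem _ _ (by rw [Lword_length]; omega)]
  exact Lword_get n f ⟨t, by rw [Lword_length]; omega⟩

lemma pwn_nonneg (hnn : ∀ i j, 0 ≤ P i j) (f : ℕ → Fin N) (r : ℕ) :
    0 ≤ pwn P f r := Finset.prod_nonneg fun _ _ => hnn _ _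

lemma pwn_antitone (hnn : ∀ i j, 0 ≤ P i j) (hrow : ∀ i, ∑ j, P i j = 1)
    (f : ℕ → Fin N) {s r : ℕ} (h : s ≤ r) : pwn P f r ≤ pwn P f s := by
  rw [pwn, ← Finset.prod_range_mul_prod_Ico (fun t => P (f t) (f (t+1))) h]
  have h1 : ∏ t ∈ Finset.Ico s r, P (f t) (f (t+1)) ≤ 1 :=
    Finset.prod_le_one (fun t _ => hnn _ _) (fun t _ => entry_le_one P hnn hrow _ _)
  calc (∏ t ∈ Finset.range s, P (f t) (f (t+1))) * ∏ t ∈ Finset.Ico s r, P (f t) (f (t+1))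
      ≤ (∏ t ∈ Finset.range s, P (f t) (f (t+1))) * 1 :=
        mul_le_mul_of_nonneg_left h1 (pwn_nonneg P hnn f s)
    _ = pwn P f s := by rw [mul_one, pwn]

lemma pword_eq_one (hall : ∀ a b, 0 < P a b → P a b = 1) :
    ∀ l, adm P l → pword P l = 1 := by
  intro l
  induction l with
  | nil => intro hl; exact absurd rfl hl.1
  | cons a t ih =>
      intro hl
      cases t with
      | nil => simp [pword]
      | cons b t' =>
          have hch := hl.2
          change List.IsChain (fun a b => 0 < P a b) _ at hch
          rw [List.isChain_cons_cons] at hch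
          rw [pword_cons, hall _ _ hch.1, one_mul]
          exact ih ⟨List.cons_ne_nil _ _, hch.2⟩

lemma pminS_finite : {x : ℝ | ∃ i j, 0 < P i j ∧ P i j = x}.Finite := by
  apply Set.Finite.subset (Set.finite_range (fun ij : Fin N × Fin N => P ij.1 ij.2))
  rintro x ⟨i, j, -, rfl⟩
  exact ⟨(i, j), rfl⟩

lemma pminS_nonempty (hnn : ∀ i j, 0 ≤ P i j) (hrow : ∀ i, ∑ j, P i j = 1) (i0 : Fin N) :
    {x : ℝ | ∃ i j, 0 < P i j ∧ P i j = x}.Nonempty := by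
  have : ∃ j, 0 < P i0 j := by
    by_contra hcon
    push_neg at hcon
    have : ∑ jj, P i0 jj ≤ 0 := Finset.sum_nonpos fun jj _ => hcon jj
    rw [hrow i0] at this
    linarith
  obtain ⟨j, hj⟩ := this
  exact ⟨P i0 j, i0, j, hj, rfl⟩

end Aux8
theorem stmt7 {N : ℕ} (P : Matrix (Fin N) (Fin N) ℝ)
    (hnn : ∀ i j, 0 ≤ P i j) (hrow : ∀ i, ∑ j, P i j = 1)
    (hirr : ∀ i j, ∃ m, 1 ≤ m ∧ 0 < (P ^ m) i j)
    (q : Fin N → ℝ) (hq : ∀ i, 0 < q i) (hq1 : ∑ i, q i = 1)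
    (pmin : ℝ) (hpmin : pmin = sInf {x : ℝ | ∃ i j, 0 < P i j ∧ P i j = x})
    (Λ : ℕ → Set (List (Fin N)))
    (hΛ : ∀ j, Λ j = {l | adm P l ∧
      pmin ^ j ≤ pword P l.dropLast ∧ pword P l < pmin ^ j})
    (C1 : ℝ)
    (hC1 : ∀ n : ℕ, 1 ≤ n → ∀ i j : Fin N, |xi P i n - xi P j n| ≤ C1) :
    ∀ j : ℕ, 1 ≤ j →
      |∑ᶠ σ ∈ Λ j, mlist q P σ * (Real.log (mlist q P σ) - useq q P σ.length)| ≤ C1 := by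
  classical
  intro j hj
  have hN : 0 < N := by
    by_contra h
    push_neg at h
    have hN0 : N = 0 := by omega
    subst hN0
    rw [show (Finset.univ : Finset (Fin 0)) = ∅ from rfl, Finset.sum_empty] at hq1
    exact one_ne_zero hq1.symm
  have i0 : Fin N := ⟨0, hN⟩
  have hC10 : 0 ≤ C1 := by
    have := hC1 1 le_rfl i0 i0
    simpa using this
  have hΛmem : ∀ l, l ∈ Λ j ↔ (adm P l ∧
      pmin ^ j ≤ pword P l.dropLast ∧ pword P l < pmin ^ j) := by
    intro l; rw [hΛ j]; exact Iff.rfl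
  -- pmin facts
  have hmem : pmin ∈ {x : ℝ | ∃ i j, 0 < P i j ∧ P i j = x} := by
    rw [hpmin]
    exact (pminS_nonempty P hnn hrow i0).csInf_mem (pminS_finite P)
  have hpminpos : 0 < pmin := by
    obtain ⟨a, b, hab, habe⟩ := hmem
    rw [← habe]; exact hab
  have hpmin1 : pmin ≤ 1 := by
    obtain ⟨a, b, hab, habe⟩ := hmem
    rw [← habe]; exact entry_le_one P hnn hrow a b
  have hpj_pos : 0 < pmin ^ j := pow_pos hpminpos j
  have hpj1 : pmin ^ j ≤ 1 := pow_le_one₀ (le_of_lt hpminpos) hpmin1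
  by_cases hB : ∃ a b, 0 < P a b ∧ P a b < 1
  case neg =>
    have hΛempty : Λ j = ∅ := by
      ext l
      rw [hΛmem]
      simp only [Set.mem_empty_iff_false, iff_false]
      rintro ⟨hadm, -, hlt⟩
      push_neg at hB
      have hall : ∀ a b, 0 < P a b → P a b = 1 := fun a b h =>
        le_antisymm (entry_le_one P hnn hrow a b) (hB a b h)
      rw [pword_eq_one P hall l hadm] at hlt
      linarith
    rw [hΛempty, finsum_mem_empty, abs_zero]
    exact hC10
  case pos =>
    -- θ : largest entry < 1
    set Sθ : Finset (Fin N × Fin N) :=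
      Finset.univ.filter (fun ab => 0 < P ab.1 ab.2 ∧ P ab.1 ab.2 < 1) with hSθdef
    have hmemS : ∀ a b, 0 < P a b → P a b < 1 → (a, b) ∈ Sθ := by
      intro a b h1 h2
      rw [hSθdef]
      simp only [Finset.mem_filter, Finset.mem_univ, true_and]
      exact ⟨h1, h2⟩
    have hSθne : (Sθ.image (fun ab => P ab.1 ab.2)).Nonempty := by
      obtain ⟨a, b, h1, h2⟩ := hB
      exact ⟨P a b, Finset.mem_image_of_mem _ (hmemS a b h1 h2)⟩
    set θ := (Sθ.image (fun ab => P ab.1 ab.2)).max' hSθne with hθdef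
    obtain ⟨ab0, hab0, hab0e⟩ := Finset.mem_image.1 (Finset.max'_mem _ hSθne)
    rw [← hθdef] at hab0e
    have hab0' := Finset.mem_filter.1 hab0
    have hθ1 : θ < 1 := by rw [← hab0e]; exact hab0'.2.2
    have hθ0 : 0 ≤ θ := by rw [← hab0e]; exact le_of_lt hab0'.2.1
    have hθub : ∀ a b, 0 < P a b → P a b < 1 → P a b ≤ θ := by
      intro a b h1 h2
      rw [hθdef]
      apply Finset.le_max'
      exact Finset.mem_image_of_mem (fun ab => P ab.1 ab.2) (hmemS a b h1 h2)
    obtain ⟨L₀, hL₀⟩ := exists_pow_lt_of_lt_one hpj_pos hθ1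
    set M₀ := L₀ * (N+1) with hM₀def
    set K := M₀ + 2 with hKdef
    -- decay
    have hdecay : ∀ (f : ℕ → Fin N) (m : ℕ), M₀ ≤ m →
        (∀ t < m, 0 < P (f t) (f (t+1))) → pwn P f m < pmin ^ j := by
      intro f m hm hpos
      have h1 : pwn P f m ≤ θ ^ (m / (N+1)) :=
        path_decay P hnn hrow hirr hB θ hθ0 hθub f m hpos
      have h2 : L₀ ≤ m / (N+1) := by
        rw [Nat.le_div_iff_mul_le (by omega)]
        omega
      have h3 : θ ^ (m / (N+1)) ≤ θ ^ L₀ :=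
        pow_le_pow_of_le_one hθ0 (le_of_lt hθ1) h2
      linarith
    -- length bounds for Λ j
    have hΛlen : ∀ l ∈ Λ j, 2 ≤ l.length ∧ l.length ≤ M₀ + 1 := by
      intro l hl
      rw [hΛmem] at hl
      obtain ⟨hadm, hge, hlt⟩ := hl
      have hlen1 : 1 ≤ l.length := List.length_pos_of_ne_nil hadm.1
      have hrep : l = Lword (l.length - 1) (fun t => l.getD t i0) :=
        eq_Lword l hadm.1 i0
      have hadm' : ∀ t < l.length - 1,
          0 < P (l.getD t i0) (l.getD (t+1) i0) :=
        (adm_Lword_iff P _ _).1 (hrep ▸ hadm)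
      have h2 : 2 ≤ l.length := by
        by_contra hcon
        have hk0 : l.length - 1 = 0 := by omega
        have h1 : pword P l = 1 := by
          conv_lhs => rw [hrep]
          rw [pword_Lword, hk0]
          simp [pwn]
        rw [h1] at hlt
        linarith
      refine ⟨h2, ?_⟩
      by_contra hcon
      push_neg at hcon
      have hkM : M₀ ≤ l.length - 2 := by omega
      have hdrop : l.dropLast = Lword (l.length - 2) (fun t => l.getD t i0) := by
        conv_lhs => rw [hrep, show l.length - 1 = (l.length - 2) + 1 by omega,
          dropLast_Lword]
      have hlt2 : pword P l.dropLast < pmin ^ j := by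
        rw [hdrop, pword_Lword]
        exact hdecay _ _ hkM (fun t ht => hadm' t (by omega))
      linarith
    have hΛfin : (Λ j).Finite :=
      Set.Finite.subset (List.finite_length_le (Fin N) (M₀+1))
        (fun l hl => (hΛlen l hl).2)
    rw [finsum_mem_eq_finite_toFinset_sum _ hΛfin]
    -- machinery on tuples of length K+1
    set eT : (Fin (K+1) → Fin N) → ℕ → Fin N :=
      fun τ t => τ ⟨min t K, by omega⟩ with heTdef
    have heTval : ∀ (τ : Fin (K+1) → Fin N) (t : ℕ) (h : t ≤ K),
        eT τ t = τ ⟨t, by omega⟩ := by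
      intro τ t h
      exact congrArg τ (Fin.ext (by simp [Nat.min_eq_left h]))
    have heT_castSucc : ∀ (τ : Fin (K+1) → Fin N) (t : Fin K),
        eT τ t.1 = τ t.castSucc := by
      intro τ t
      rw [heTval τ t.1 (le_of_lt t.2)]
      exact congrArg τ (Fin.ext rfl)
    have heT_succ : ∀ (τ : Fin (K+1) → Fin N) (t : Fin K),
        eT τ (t.1+1) = τ t.succ := by
      intro τ t
      rw [heTval τ (t.1+1) t.2]
      exact congrArg τ (Fin.ext rfl)
    set admT : (Fin (K+1) → Fin N) → Prop :=
      fun τ => ∀ t < K, 0 < P (eT τ t) (eT τ (t+1)) with hadmTdef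
    have hwpwn : ∀ τ : Fin (K+1) → Fin N, wprod P τ = pwn P (eT τ) K := by
      intro τ
      apply wprod_eq_pwn P K τ (eT τ)
      intro t ht
      exact (heTval τ t ht).symm
    have hwzero : ∀ τ : Fin (K+1) → Fin N, ¬ admT τ → wprod P τ = 0 := by
      intro τ h
      have h' : ∃ t, t < K ∧ ¬ 0 < P (eT τ t) (eT τ (t+1)) := by
        by_contra hcon
        push_neg at hcon
        exact h (fun t ht => hcon t ht)
      obtain ⟨t, htK, hle⟩ := h'
      have h0 : P (τ (⟨t, htK⟩ : Fin K).castSucc) (τ (⟨t, htK⟩ : Fin K).succ) = 0 := by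
        rw [← heT_castSucc τ ⟨t, htK⟩, ← heT_succ τ ⟨t, htK⟩]
        exact le_antisymm (not_lt.1 hle) (hnn _ _)
      rw [wprod]
      exact Finset.prod_eq_zero (Finset.mem_univ _) h0
    have hwlt : ∀ τ : Fin (K+1) → Fin N, wprod P τ < pmin ^ j := by
      intro τ
      by_cases hadm : admT τ
      · rw [hwpwn τ]
        exact hdecay (eT τ) K (by omega) (fun t ht => hadm t ht)
      · rw [hwzero τ hadm]
        exact hpj_pos
    have hex : ∀ τ : Fin (K+1) → Fin N, ∃ r, r ≤ K ∧ pwn P (eT τ) r < pmin ^ j :=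
      fun τ => ⟨K, le_rfl, by rw [← hwpwn τ]; exact hwlt τ⟩
    set r0 : (Fin (K+1) → Fin N) → ℕ := fun τ => Nat.find (hex τ) with hr0def
    have hr0K : ∀ τ, r0 τ ≤ K := fun τ => (Nat.find_spec (hex τ)).1
    have hr0lt : ∀ τ, pwn P (eT τ) (r0 τ) < pmin ^ j := fun τ => (Nat.find_spec (hex τ)).2
    have hr0ge : ∀ τ, ∀ s, s < r0 τ → pmin ^ j ≤ pwn P (eT τ) s := by
      intro τ s hs
      have h1 := Nat.find_min (hex τ) hs
      push_neg at h1
      exact h1 (by have := hr0K τ; omega)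
    have hr0pos : ∀ τ, 1 ≤ r0 τ := by
      intro τ
      by_contra h
      have h0 : r0 τ = 0 := by omega
      have h1 := hr0lt τ
      rw [h0] at h1
      have h2 : pwn P (eT τ) 0 = 1 := by simp [pwn]
      rw [h2] at h1
      linarith
    set ρ : (Fin (K+1) → Fin N) → List (Fin N) :=
      fun τ => Lword (r0 τ) (eT τ) with hρdef
    have hρmem : ∀ τ, admT τ → ρ τ ∈ Λ j := by
      intro τ hadm
      rw [hΛmem]
      refine ⟨?_, ?_, ?_⟩
      · show adm P (Lword (r0 τ) (eT τ))
        rw [adm_Lword_iff]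
        exact fun t ht => hadm t (lt_of_lt_of_le ht (hr0K τ))
      · show pmin ^ j ≤ pword P (Lword (r0 τ) (eT τ)).dropLast
        rw [show r0 τ = (r0 τ - 1) + 1 from by have := hr0pos τ; omega,
          dropLast_Lword, pword_Lword]
        exact hr0ge τ (r0 τ - 1) (by have := hr0pos τ; omega)
      · show pword P (Lword (r0 τ) (eT τ)) < pmin ^ j
        rw [pword_Lword]
        exact hr0lt τ
    -- the per-element data
    have hperl : ∀ l ∈ hΛfin.toFinset, ∃ (k : ℕ) (hkK : k + 1 ≤ K)
        (σ : Fin (k+1) → Fin N),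
        l.length = k + 1 ∧ k ≤ M₀ ∧
        (Finset.univ.filter (fun τ : Fin (K+1) → Fin N => admT τ ∧ ρ τ = l))
          = (Eset k K (Nat.le_of_succ_le hkK) σ).filter admT ∧
        mlist q P l = q (σ 0) * wprod P σ ∧
        σ (Fin.last k) = l.getD (l.length - 1) i0 := by
      intro l hl
      have hlΛ : l ∈ Λ j := hΛfin.mem_toFinset.1 hl
      obtain ⟨h2, hM1⟩ := hΛlen l hlΛ
      rw [hΛmem] at hlΛ
      obtain ⟨hadm, hge, hlt⟩ := hlΛ
      have hk1 : 1 ≤ l.length - 1 := by omega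
      refine ⟨l.length - 1, by omega, fun i => l.getD i.val i0, by omega, by omega,
        ?_, ?_, ?_⟩
      · -- fiber = Eset ∩ adm
        have hrep : l = Lword (l.length - 1) (fun t => l.getD t i0) :=
          eq_Lword l hadm.1 i0
        have hpl : pword P l = pwn P (fun t => l.getD t i0) (l.length - 1) := by
          conv_lhs => rw [hrep]
          rw [pword_Lword]
        have hpd : pword P l.dropLast
            = pwn P (fun t => l.getD t i0) (l.length - 2) := by
          conv_lhs => rw [hrep, show l.length - 1 = (l.length - 2) + 1 by omega,
            dropLast_Lword]
          rw [pword_Lword]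
        ext τ
        simp only [Finset.mem_filter, Finset.mem_univ, true_and, Eset]
        constructor
        · rintro ⟨hadτ, hρl⟩
          refine ⟨?_, hadτ⟩
          intro i
          have hlenρ : (ρ τ).length = r0 τ + 1 := Lword_length _ _
          have hr0k : r0 τ = l.length - 1 := by
            have := congrArg List.length hρl
            rw [hlenρ] at this
            omega
          have hgd : ∀ t : ℕ, t ≤ l.length - 1 → l.getD t i0 = eT τ t := by
            intro t ht
            rw [← hρl]
            show (Lword (r0 τ) (eT τ)).getD t i0 = eT τ t
            exact Lword_getD (r0 τ) (eT τ) t i0 (by omega)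
          show τ _ = l.getD i.val i0
          rw [hgd i.val (by have := i.isLt; omega),
            heTval τ i.val (by have := i.isLt; omega)]
          exact congrArg τ (Fin.ext rfl)
        · rintro ⟨hpre, hadτ⟩
          refine ⟨hadτ, ?_⟩
          have hpre' : ∀ t, t ≤ l.length - 1 → eT τ t = l.getD t i0 := by
            intro t ht
            have h1 := hpre ⟨t, by omega⟩
            rw [heTval τ t (by omega)]
            rw [← h1]
            exact congrArg τ (Fin.ext rfl)
          have hpwe : ∀ s, s ≤ l.length - 1 →
              pwn P (eT τ) s = pwn P (fun t => l.getD t i0) s := by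
            intro s hs
            rw [pwn, pwn]
            apply Finset.prod_congr rfl
            intro t htm
            rw [Finset.mem_range] at htm
            rw [hpre' t (by omega), hpre' (t+1) (by omega)]
          have hr0k : r0 τ = l.length - 1 := by
            have hub : r0 τ ≤ l.length - 1 := by
              apply Nat.find_min' (hex τ)
              refine ⟨by omega, ?_⟩
              rw [hpwe _ le_rfl, ← hpl]
              exact hlt
            have hlb : ¬ (r0 τ < l.length - 1) := by
              intro hcon
              have ha1 : pwn P (eT τ) (l.length - 2) ≤ pwn P (eT τ) (r0 τ) :=
                pwn_antitone P hnn hrow _ (by omega)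
              have ha2 : pmin ^ j ≤ pwn P (eT τ) (l.length - 2) := by
                rw [hpwe (l.length - 2) (by omega), ← hpd]
                exact hge
              have := hr0lt τ
              linarith
            omega
          show Lword (r0 τ) (eT τ) = l
          rw [hr0k]
          conv_rhs => rw [hrep]
          apply List.ext_get (by rw [Lword_length, Lword_length])
          intro i h1i h2i
          rw [Lword_get, Lword_get]
          exact hpre' i (by rw [Lword_length] at h1i; omega)
      · -- mlist
        have hrep : l = Lword (l.length - 1) (fun t => l.getD t i0) :=
          eq_Lword l hadm.1 i0
        conv_lhs => rw [hrep]
        rw [mlist_Lword]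
        have h1 : wprod P (fun i : Fin (l.length - 1 + 1) => l.getD i.val i0)
            = pwn P (fun t => l.getD t i0) (l.length - 1) :=
          wprod_eq_pwn P _ _ _ (fun t ht => rfl)
        rw [h1]
        norm_num
      · -- last
        exact congrArg (fun t => l.getD t i0) rfl
    -- global quantities
    set UK : ℝ := ∑ τ : Fin (K+1) → Fin N,
      (q (τ 0) * wprod P τ) * Real.log (q (τ 0) * wprod P τ) with hUKdef
    have hmapsto : ∀ τ ∈ Finset.univ.filter admT, ρ τ ∈ hΛfin.toFinset := by
      intro τ hτ
      rw [Set.Finite.mem_toFinset]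
      exact hρmem τ (Finset.mem_filter.1 hτ).2
    have hpart : ∀ F : (Fin (K+1) → Fin N) → ℝ, (∀ τ, ¬ admT τ → F τ = 0) →
        ∑ τ : Fin (K+1) → Fin N, F τ
          = ∑ l ∈ hΛfin.toFinset,
              ∑ τ ∈ Finset.univ.filter (fun τ => admT τ ∧ ρ τ = l), F τ := by
      intro F hF
      have h1 : ∑ τ : Fin (K+1) → Fin N, F τ = ∑ τ ∈ Finset.univ.filter admT, F τ := by
        symm
        apply Finset.sum_subset (Finset.filter_subset _ _)
        intro τ _ hτ
        exact hF τ (fun h => hτ (Finset.mem_filter.2 ⟨Finset.mem_univ _, h⟩))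
      rw [h1, ← Finset.sum_fiberwise_of_maps_to hmapsto F]
      apply Finset.sum_congr rfl
      intro l _
      apply Finset.sum_congr _ (fun _ _ => rfl)
      rw [Finset.filter_filter]
    have hfsub : ∀ (k : ℕ) (hkK : k ≤ K) (σ : Fin (k+1) → Fin N)
        (F : (Fin (K+1) → Fin N) → ℝ), (∀ τ, ¬ admT τ → F τ = 0) →
        ∑ τ ∈ (Eset k K hkK σ).filter admT, F τ = ∑ τ ∈ Eset k K hkK σ, F τ := by
      intro k hkK σ F hF
      apply Finset.sum_subset (Finset.filter_subset _ _)
      intro τ hτ hτ2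
      exact hF τ (fun h => hτ2 (Finset.mem_filter.2 ⟨hτ, h⟩))
    have hτ0σ : ∀ (k : ℕ) (hkK : k ≤ K) (σ : Fin (k+1) → Fin N),
        ∀ τ ∈ Eset k K hkK σ, τ 0 = σ 0 := by
      intro k hkK σ τ hτ
      simp only [Eset, Finset.mem_filter, Finset.mem_univ, true_and] at hτ
      have := hτ 0
      rwa [castLE_zero' k K (by omega)] at this
    have hfib_mass : ∀ l ∈ hΛfin.toFinset,
        ∑ τ ∈ Finset.univ.filter (fun τ => admT τ ∧ ρ τ = l), (q (τ 0) * wprod P τ)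
          = mlist q P l := by
      intro l hl
      obtain ⟨k, hkK, σ, hlen, hkM, hfib, hml, hlast⟩ := hperl l hl
      rw [hfib, hfsub k _ σ _ (fun τ h => by rw [hwzero τ h, mul_zero]),
        Finset.sum_congr rfl (fun τ hτ => by rw [hτ0σ k _ σ τ hτ]),
        ← Finset.mul_sum, ML_mass P hrow k σ K _, ← hml]
    have hfib_D : ∀ l ∈ hΛfin.toFinset,
        ∑ τ ∈ Finset.univ.filter (fun τ => admT τ ∧ ρ τ = l),
            (q (τ 0) * wprod P τ) * Real.log (q (τ 0) * wprod P τ)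
          = mlist q P l * Real.log (mlist q P l)
            + mlist q P l * xi P (l.getD (l.length - 1) i0) (K - (l.length - 1)) := by
      intro l hl
      obtain ⟨k, hkK, σ, hlen, hkM, hfib, hml, hlast⟩ := hperl l hl
      have hll : l.length - 1 = k := by omega
      rw [hll] at hlast
      rw [hfib, hfsub k _ σ _ (fun τ h => by simp [hwzero τ h]),
        Finset.sum_congr rfl (fun τ hτ => by rw [hτ0σ k _ σ τ hτ]),
        ML_ent P hnn hrow k σ (q (σ 0)) (le_of_lt (hq _)) K _, ← hml, hll, ← hlast]
    have hUKpart : ∑ l ∈ hΛfin.toFinset,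
        (∑ τ ∈ Finset.univ.filter (fun τ => admT τ ∧ ρ τ = l),
          (q (τ 0) * wprod P τ) * Real.log (q (τ 0) * wprod P τ)) = UK := by
      rw [hUKdef]
      exact (hpart _ (fun τ h => by simp [hwzero τ h])).symm
    have hmass1 : ∑ l ∈ hΛfin.toFinset, mlist q P l = 1 := by
      have h1 : ∑ τ : Fin (K+1) → Fin N, (q (τ 0) * wprod P τ) = 1 :=
        mass_level P q hrow hq1 K
      rw [← h1, hpart _ (fun τ h => by rw [hwzero τ h, mul_zero])]
      exact (Finset.sum_congr rfl (fun l hl => hfib_mass l hl)).symm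
    -- the per-element estimate
    have hkey : ∀ l ∈ hΛfin.toFinset,
        |mlist q P l * (Real.log (mlist q P l) - useq q P l.length)
          - ((∑ τ ∈ Finset.univ.filter (fun τ => admT τ ∧ ρ τ = l),
              (q (τ 0) * wprod P τ) * Real.log (q (τ 0) * wprod P τ))
            - mlist q P l * UK)|
          ≤ mlist q P l * C1 := by
      intro l hl
      obtain ⟨k, hkK, σ, hlen, hkM, hfib, hml, hlast⟩ := hperl l hl
      have hll : l.length - 1 = k := by omega
      rw [hll] at hlast
      have hn1 : 1 ≤ K - k := by omega
      have hm0 : 0 ≤ mlist q P l := by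
        rw [hml]
        exact mul_nonneg (le_of_lt (hq _)) (wprod_nonneg P hnn σ)
      set A : ℝ := ∑ σ' : Fin (k+1) → Fin N,
        (q (σ' 0) * wprod P σ') * xi P (σ' (Fin.last k)) (K - k) with hAdef
      have hUs : UK = useq q P l.length + A := by
        rw [hUKdef, U_split P q hnn hrow hq k K (by omega), Finset.sum_add_distrib]
        congr 1
        · rw [hlen]
          rfl
      have hG : ∑ τ ∈ Finset.univ.filter (fun τ => admT τ ∧ ρ τ = l),
          (q (τ 0) * wprod P τ) * Real.log (q (τ 0) * wprod P τ)
          = mlist q P l * Real.log (mlist q P l)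
            + mlist q P l * xi P (σ (Fin.last k)) (K - k) := by
        rw [hfib_D l hl, hll, ← hlast]
      have hmassk := mass_level P q hrow hq1 k
      have hxib : |A - xi P (σ (Fin.last k)) (K - k)| ≤ C1 := by
        have hsum : ∑ σ' : Fin (k+1) → Fin N, (q (σ' 0) * wprod P σ')
              * (xi P (σ' (Fin.last k)) (K - k) - xi P (σ (Fin.last k)) (K - k))
            = A - xi P (σ (Fin.last k)) (K - k) := by
          rw [Finset.sum_congr rfl (fun σ' _ => mul_sub (q (σ' 0) * wprod P σ')
            (xi P (σ' (Fin.last k)) (K - k)) (xi P (σ (Fin.last k)) (K - k))),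
            Finset.sum_sub_distrib, ← Finset.sum_mul, hmassk, one_mul, hAdef]
        rw [← hsum]
        calc |∑ σ' : Fin (k+1) → Fin N, (q (σ' 0) * wprod P σ')
              * (xi P (σ' (Fin.last k)) (K - k) - xi P (σ (Fin.last k)) (K - k))|
            ≤ ∑ σ' : Fin (k+1) → Fin N, |(q (σ' 0) * wprod P σ')
              * (xi P (σ' (Fin.last k)) (K - k) - xi P (σ (Fin.last k)) (K - k))| :=
              Finset.abs_sum_le_sum_abs _ _
          _ ≤ ∑ σ' : Fin (k+1) → Fin N, (q (σ' 0) * wprod P σ') * C1 := by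
              apply Finset.sum_le_sum
              intro σ' _
              have hnn' : 0 ≤ q (σ' 0) * wprod P σ' :=
                mul_nonneg (le_of_lt (hq _)) (wprod_nonneg P hnn σ')
              rw [abs_mul, abs_of_nonneg hnn']
              exact mul_le_mul_of_nonneg_left (hC1 (K - k) hn1 _ _) hnn'
          _ = C1 := by rw [← Finset.sum_mul, hmassk, one_mul]
      have hδ : mlist q P l * (Real.log (mlist q P l) - useq q P l.length)
          - ((∑ τ ∈ Finset.univ.filter (fun τ => admT τ ∧ ρ τ = l),
              (q (τ 0) * wprod P τ) * Real.log (q (τ 0) * wprod P τ))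
            - mlist q P l * UK)
          = mlist q P l * (A - xi P (σ (Fin.last k)) (K - k)) := by
        rw [hG]
        have husq : useq q P l.length = UK - A := by rw [hUs]; ring
        rw [husq]
        ring
      rw [hδ, abs_mul, abs_of_nonneg hm0]
      exact mul_le_mul_of_nonneg_left hxib hm0
    -- final assembly
    calc |∑ l ∈ hΛfin.toFinset,
          mlist q P l * (Real.log (mlist q P l) - useq q P l.length)|
        = |∑ l ∈ hΛfin.toFinset,
            (mlist q P l * (Real.log (mlist q P l) - useq q P l.length)
              - ((∑ τ ∈ Finset.univ.filter (fun τ => admT τ ∧ ρ τ = l),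
                  (q (τ 0) * wprod P τ) * Real.log (q (τ 0) * wprod P τ))
                - mlist q P l * UK))| := by
          congr 1
          have hzero : ∑ l ∈ hΛfin.toFinset,
              ((∑ τ ∈ Finset.univ.filter (fun τ => admT τ ∧ ρ τ = l),
                (q (τ 0) * wprod P τ) * Real.log (q (τ 0) * wprod P τ))
                - mlist q P l * UK) = 0 := by
            rw [Finset.sum_sub_distrib, ← Finset.sum_mul, hUKpart, hmass1, one_mul,
              sub_self]
          rw [Finset.sum_sub_distrib, hzero, sub_zero]
      _ ≤ ∑ l ∈ hΛfin.toFinset,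
            |mlist q P l * (Real.log (mlist q P l) - useq q P l.length)
              - ((∑ τ ∈ Finset.univ.filter (fun τ => admT τ ∧ ρ τ = l),
                  (q (τ 0) * wprod P τ) * Real.log (q (τ 0) * wprod P τ))
                - mlist q P l * UK)| := Finset.abs_sum_le_sum_abs _ _
      _ ≤ ∑ l ∈ hΛfin.toFinset, mlist q P l * C1 := Finset.sum_le_sum hkey
      _ = 1 * C1 := by rw [← Finset.sum_mul, hmass1]
      _ = C1 := one_mul C1
end

section
/- Suppose for each j the quantities ê_{ψ_j}(μ) satisfy Σ_{σ∈Λ_j} m_σ log c_σ + C_0 ≤ ê_{ψ_j}(μ) ≤ Σ_{σ∈Λ_j} m_σ log c_σ, and the ratios t_j := (Σ_{Λ_j} m_σ log m_σ)/(Σ_{Λ_j} m_σ log c_σ) satisfy |t_j − s_0| ≤ C_4/j with s_0 > 0. Assume also p̲^{j+1} ≤ p_σ < p̲^j for σ ∈ Λ_j, q̄^{-1}p̲^{-j} ≤ ψ_j ≤ q̲^{-1}p̲^{-(j+1)}, and m_σ = q_{σ_1}p_σ with q̲ ≤ q_{σ_1} ≤ q̄. Then Q_{ψ_j}(μ, s_0)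 := s_0^{-1} log ψ_j + ê_{ψ_j}(μ) is bounded above and below uniformly in j, i.e., 0 < liminf_j ψ_j^{1/s_0} e_{ψ_j,0}(μ) ≤ limsup_j ψ_j^{1/s_0} e_{ψ_j,0}(μ) < ∞. -/
open MeasureTheory Filter

/-- The `n`-th geometric mean quantization error. -/
noncomputable def geErr {E : Type*} [NormedAddCommGroup E] [MeasurableSpace E]
    (n : ℕ) (μ : Measure E) : ℝ :=
  sInf ((fun α : Finset E => Real.exp (∫ x, Real.log (Metric.infDist x ↑α) ∂μ)) ''
    {α : Finset E | α.Nonempty ∧ α.card ≤ n})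

set_option maxHeartbeats 1000000 in
theorem stmt15 {E ι : Type*} [NormedAddCommGroup E] [MeasurableSpace E]
    (μ : Measure E) [IsProbabilityMeasure μ]
    (Λ : ℕ → Set ι) (hfin : ∀ j, (Λ j).Finite)
    (p c m qh : ι → ℝ)
    (pmin qmin qmax : ℝ)
    (hpmin : 0 < pmin ∧ pmin < 1) (hqmin : 0 < qmin ∧ qmin < 1)
    (hqmax : 0 < qmax ∧ qmax < 1) (hqmm : qmin ≤ qmax)
    (hm : ∀ σ, m σ = qh σ * p σ)
    (hqh : ∀ σ, qmin ≤ qh σ ∧ qh σ ≤ qmax)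
    (hpΛ : ∀ j : ℕ, ∀ σ ∈ Λ j, pmin ^ (j + 1) ≤ p σ ∧ p σ < pmin ^ j)
    (hsum1 : ∀ j : ℕ, (∑ᶠ σ ∈ Λ j, m σ) = 1)
    (ψ : ℕ → ℕ) (hψdef : ∀ j, ψ j = (Λ j).ncard)
    (hψ : ∀ j : ℕ, 1 ≤ j → qmax⁻¹ * (pmin ^ j)⁻¹ ≤ (ψ j : ℝ) ∧
      (ψ j : ℝ) ≤ qmin⁻¹ * (pmin ^ (j + 1))⁻¹)
    (C0 C4 s0 : ℝ) (hs0 : 0 < s0) (J0 : ℕ)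
    (hsand : ∀ j : ℕ, J0 ≤ j →
      (∑ᶠ σ ∈ Λ j, m σ * Real.log (c σ)) + C0 ≤ Real.log (geErr (ψ j) μ) ∧
      Real.log (geErr (ψ j) μ) ≤ ∑ᶠ σ ∈ Λ j, m σ * Real.log (c σ))
    (t : ℕ → ℝ)
    (ht : ∀ j, t j = (∑ᶠ σ ∈ Λ j, m σ * Real.log (m σ)) /
                     (∑ᶠ σ ∈ Λ j, m σ * Real.log (c σ)))
    (htj : ∀ j : ℕ, max 1 J0 ≤ j → |t j - s0| ≤ C4 / (j : ℝ)) :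
    0 < Filter.atTop.liminf
        (fun j : ℕ => ENNReal.ofReal ((ψ j : ℝ) ^ (1 / s0) * geErr (ψ j) μ)) ∧
      Filter.atTop.liminf
          (fun j : ℕ => ENNReal.ofReal ((ψ j : ℝ) ^ (1 / s0) * geErr (ψ j) μ)) ≤
        Filter.atTop.limsup
          (fun j : ℕ => ENNReal.ofReal ((ψ j : ℝ) ^ (1 / s0) * geErr (ψ j) μ)) ∧
      Filter.atTop.limsup
          (fun j : ℕ => ENNReal.ofReal ((ψ j : ℝ) ^ (1 / s0) * geErr (ψ j) μ)) < ⊤ := by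
  obtain ⟨hp0, hp1⟩ := hpmin
  obtain ⟨hq0, hq1⟩ := hqmin
  obtain ⟨hQ0, hQ1⟩ := hqmax
  set L := Real.log pmin with hLdef
  have hLneg : L < 0 := Real.log_neg hp0 hp1
  have hlq : Real.log qmin < 0 := Real.log_neg hq0 hq1
  have hlQ : Real.log qmax < 0 := Real.log_neg hQ0 hQ1
  have hlqQ : Real.log qmin ≤ Real.log qmax := Real.log_le_log hq0 hqmm
  -- C4 is nonnegative
  have hC4 : 0 ≤ C4 := by
    have h := htj (max 1 J0) le_rfl
    have hj1 : (1:ℝ) ≤ ((max 1 J0 : ℕ) : ℝ) := by exact_mod_cast Nat.le_max_left 1 J0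
    have h0 : (0:ℝ) ≤ C4 / ((max 1 J0 : ℕ) : ℝ) := le_trans (abs_nonneg _) h
    by_contra hneg
    push_neg at hneg
    have : C4 / ((max 1 J0 : ℕ) : ℝ) < 0 := div_neg_of_neg_of_pos hneg (by linarith)
    linarith
  set D := Real.log qmax - Real.log qmin - L with hDdef
  have hD : 0 ≤ D := by simp only [hDdef]; linarith
  set K1 := -Real.log qmin - L with hK1def
  have hK1 : 0 < K1 := by simp only [hK1def]; linarith
  set K : ℝ := D / s0 + 4 * K1 * C4 / s0 ^ 2 + |C0| with hKdef
  have hKnn : 0 ≤ K := by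
    rw [hKdef]
    have h1 : 0 ≤ D / s0 := div_nonneg hD hs0.le
    have h2 : 0 ≤ 4 * K1 * C4 / s0 ^ 2 :=
      div_nonneg (by positivity) (by positivity)
    have h3 : 0 ≤ |C0| := abs_nonneg _
    linarith
  -- the key eventual two-sided bound
  have key : ∀ᶠ j : ℕ in atTop,
      Real.exp (-K) ≤ (ψ j : ℝ) ^ (1 / s0) * geErr (ψ j) μ ∧
      (ψ j : ℝ) ^ (1 / s0) * geErr (ψ j) μ ≤ Real.exp K := by
    have hevC : ∀ᶠ j : ℕ in atTop, C4 / (j : ℝ) ≤ s0 / 2 :=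
      (tendsto_const_div_atTop_nhds_zero_nat C4).eventually
        (eventually_le_nhds (by linarith))
    have hevJ : ∀ᶠ j : ℕ in atTop, max 1 J0 ≤ j := eventually_ge_atTop _
    filter_upwards [hevC, hevJ] with j hC4j hjJ
    have hj1 : 1 ≤ j := le_trans (Nat.le_max_left 1 J0) hjJ
    have hjJ0 : J0 ≤ j := le_trans (Nat.le_max_right 1 J0) hjJ
    have hjR : (1:ℝ) ≤ (j : ℝ) := by exact_mod_cast hj1
    have hjpos : (0:ℝ) < (j : ℝ) := by linarith
    -- rewrite finsums as finset sums
    set s : Finset ι := (hfin j).toFinset with hsdef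
    have hcoe : (↑s : Set ι) = Λ j := (hfin j).coe_toFinset
    have hfin_eq : ∀ f : ι → ℝ, (∑ᶠ σ ∈ Λ j, f σ) = ∑ σ ∈ s, f σ := by
      intro f; rw [← hcoe, finsum_mem_coe_finset]
    have hsum1' : ∑ σ ∈ s, m σ = 1 := by rw [← hfin_eq]; exact hsum1 j
    set M : ℝ := ∑ σ ∈ s, m σ * Real.log (m σ) with hMdef
    set S : ℝ := ∑ σ ∈ s, m σ * Real.log (c σ) with hSdef
    have hmem : ∀ σ ∈ s, σ ∈ Λ j := by
      intro σ hσ; rwa [← hcoe]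
    -- pointwise bounds for log m σ
    have hlogm : ∀ σ ∈ s,
        Real.log qmin + ((j:ℝ) + 1) * L ≤ Real.log (m σ) ∧
        Real.log (m σ) ≤ Real.log qmax + (j:ℝ) * L := by
      intro σ hσ
      obtain ⟨hplo, hphi⟩ := hpΛ j σ (hmem σ hσ)
      obtain ⟨hqlo, hqhi⟩ := hqh σ
      have hppos : 0 < p σ := lt_of_lt_of_le (pow_pos hp0 _) hplo
      have hqpos : 0 < qh σ := lt_of_lt_of_le hq0 hqlo
      have hlm : Real.log (m σ) = Real.log (qh σ) + Real.log (p σ) := by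
        rw [hm σ, Real.log_mul hqpos.ne' hppos.ne']
      constructor
      · have h1 : Real.log (pmin ^ (j+1)) ≤ Real.log (p σ) :=
          Real.log_le_log (pow_pos hp0 _) hplo
        rw [Real.log_pow] at h1
        have h2 : Real.log qmin ≤ Real.log (qh σ) := Real.log_le_log hq0 hqlo
        rw [hlm]; push_cast at h1 ⊢; linarith
      · have h1 : Real.log (p σ) ≤ Real.log (pmin ^ j) :=
          Real.log_le_log hppos hphi.le
        rw [Real.log_pow] at h1
        have h2 : Real.log (qh σ) ≤ Real.log qmax := Real.log_le_log hqpos hqhi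
        rw [hlm]; linarith
    have hmnn : ∀ σ ∈ s, 0 ≤ m σ := by
      intro σ hσ
      obtain ⟨hplo, _⟩ := hpΛ j σ (hmem σ hσ)
      have hppos : 0 < p σ := lt_of_lt_of_le (pow_pos hp0 _) hplo
      have hqpos : 0 < qh σ := lt_of_lt_of_le hq0 (hqh σ).1
      rw [hm σ]; positivity
    -- bounds on M
    have hMlo : Real.log qmin + ((j:ℝ) + 1) * L ≤ M := by
      calc Real.log qmin + ((j:ℝ) + 1) * L
          = ∑ σ ∈ s, m σ * (Real.log qmin + ((j:ℝ) + 1) * L) := by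
            rw [← Finset.sum_mul, hsum1', one_mul]
        _ ≤ M := Finset.sum_le_sum (fun σ hσ =>
            mul_le_mul_of_nonneg_left (hlogm σ hσ).1 (hmnn σ hσ))
    have hMhi : M ≤ Real.log qmax + (j:ℝ) * L := by
      calc M ≤ ∑ σ ∈ s, m σ * (Real.log qmax + (j:ℝ) * L) :=
            Finset.sum_le_sum (fun σ hσ =>
              mul_le_mul_of_nonneg_left (hlogm σ hσ).2 (hmnn σ hσ))
        _ = Real.log qmax + (j:ℝ) * L := by rw [← Finset.sum_mul, hsum1', one_mul]
    have hMneg : M < 0 := by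
      have : (j:ℝ) * L ≤ 0 := mul_nonpos_of_nonneg_of_nonpos hjpos.le hLneg.le
      linarith
    -- t j bounds
    have htj' : |t j - s0| ≤ C4 / (j:ℝ) := htj j hjJ
    have htlo : s0 / 2 ≤ t j := by
      have := abs_le.mp htj'; linarith [this.1]
    have hthi : t j ≤ 3 * s0 / 2 := by
      have := abs_le.mp htj'; linarith [this.2]
    have htpos : 0 < t j := by linarith
    have htval : t j = M / S := by rw [ht j, hfin_eq, hfin_eq]
    have hSne : S ≠ 0 := by
      intro h0
      rw [htval, h0, div_zero] at htpos
      exact lt_irrefl _ htpos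
    have hMts : M = t j * S := by rw [htval, div_mul_cancel₀ _ hSne]
    have hSneg : S < 0 := by
      by_contra h
      push_neg at h
      have : 0 ≤ t j * S := mul_nonneg htpos.le h
      linarith [hMts ▸ this]
    -- geErr is positive
    have hsand' := hsand j hjJ0
    rw [hfin_eq] at hsand'
    obtain ⟨hlo, hhi⟩ := hsand'
    have hge0 : 0 ≤ geErr (ψ j) μ := by
      apply Real.sInf_nonneg
      rintro x ⟨α, -, rfl⟩
      exact (Real.exp_pos _).le
    have hgpos : 0 < geErr (ψ j) μ := by
      rcases hge0.lt_or_eq with h | h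
      · exact h
      · exfalso
        rw [← h, Real.log_zero] at hhi
        linarith
    -- bounds on log ψ j
    have hψ' := hψ j hj1
    have hψpos : (0:ℝ) < (ψ j : ℝ) := by
      have : (0:ℝ) < qmax⁻¹ * (pmin ^ j)⁻¹ := by positivity
      linarith [hψ'.1]
    have hlψlo : -Real.log qmax - (j:ℝ) * L ≤ Real.log (ψ j : ℝ) := by
      have h1 : Real.log (qmax⁻¹ * (pmin ^ j)⁻¹) ≤ Real.log (ψ j : ℝ) :=
        Real.log_le_log (by positivity) hψ'.1
      rw [Real.log_mul (by positivity) (by positivity), Real.log_inv,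
        Real.log_inv, Real.log_pow] at h1
      linarith
    have hlψhi : Real.log (ψ j : ℝ) ≤ -Real.log qmin - ((j:ℝ) + 1) * L := by
      have h1 : Real.log (ψ j : ℝ) ≤ Real.log (qmin⁻¹ * (pmin ^ (j+1))⁻¹) :=
        Real.log_le_log hψpos hψ'.2
      rw [Real.log_mul (by positivity) (by positivity), Real.log_inv,
        Real.log_inv, Real.log_pow] at h1
      push_cast at h1
      linarith
    set lψ := Real.log (ψ j : ℝ) with hlψdef
    -- |lψ + M| ≤ D
    have habs1 : |lψ + M| ≤ D := by
      rw [abs_le]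
      constructor
      · simp only [hDdef]; linarith
      · simp only [hDdef]; linarith
    -- |M| ≤ 2 j K1
    have habsM : |M| ≤ 2 * (j:ℝ) * K1 := by
      rw [abs_of_neg hMneg]
      have h1 : -M ≤ -Real.log qmin - ((j:ℝ)+1) * L := by linarith
      have h2 : -Real.log qmin - ((j:ℝ)+1) * L = K1 + (j:ℝ) * (-L) := by
        simp only [hK1def]; ring
      have h3 : (j:ℝ) * (-L) ≤ (j:ℝ) * K1 := by
        apply mul_le_mul_of_nonneg_left _ hjpos.le
        simp only [hK1def]; linarith
      have h4 : K1 ≤ (j:ℝ) * K1 := le_mul_of_one_le_left hK1.le hjR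
      linarith
    -- |S - M / s0| ≤ 4 K1 C4 / s0^2
    have hSM : |S - M / s0| ≤ 4 * K1 * C4 / s0 ^ 2 := by
      have heq : S - M / s0 = M * (s0 - t j) / (t j * s0) := by
        rw [hMts]
        field_simp
      have h1 : |M * (s0 - t j)| ≤ 2 * K1 * C4 := by
        rw [abs_mul]
        have h2 : |s0 - t j| ≤ C4 / (j:ℝ) := by rwa [abs_sub_comm]
        calc |M| * |s0 - t j| ≤ (2 * (j:ℝ) * K1) * (C4 / (j:ℝ)) :=
              mul_le_mul habsM h2 (abs_nonneg _) (by positivity)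
          _ = 2 * K1 * C4 := by field_simp
      have hts : s0 ^ 2 / 2 ≤ t j * s0 := by
        calc s0 ^ 2 / 2 = s0 / 2 * s0 := by ring
          _ ≤ t j * s0 := mul_le_mul_of_nonneg_right htlo hs0.le
      have htspos : 0 < t j * s0 := mul_pos htpos hs0
      rw [heq, abs_div, abs_of_pos htspos]
      calc |M * (s0 - t j)| / (t j * s0) ≤ (2 * K1 * C4) / (s0 ^ 2 / 2) :=
            div_le_div₀ (by positivity) h1 (by positivity) hts
        _ = 4 * K1 * C4 / s0 ^ 2 := by field_simp; ring
    -- combine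
    have hK3 : |1 / s0 * lψ + S| ≤ D / s0 + 4 * K1 * C4 / s0 ^ 2 := by
      have hsplit : 1 / s0 * lψ + S = 1 / s0 * (lψ + M) + (S - M / s0) := by
        field_simp
        ring
      have h1 : |1 / s0 * (lψ + M)| ≤ D / s0 := by
        rw [abs_mul, abs_of_pos (by positivity : (0:ℝ) < 1 / s0)]
        rw [div_eq_mul_inv D s0, mul_comm D s0⁻¹, ← one_div]
        exact mul_le_mul_of_nonneg_left habs1 (by positivity)
      calc |1 / s0 * lψ + S| = |1 / s0 * (lψ + M) + (S - M / s0)| := by rw [hsplit]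
        _ ≤ |1 / s0 * (lψ + M)| + |S - M / s0| := abs_add_le _ _
        _ ≤ D / s0 + 4 * K1 * C4 / s0 ^ 2 := add_le_add h1 hSM
    have hK3' := abs_le.mp hK3
    set eh := Real.log (geErr (ψ j) μ) with hehdef
    have hQhi : 1 / s0 * lψ + eh ≤ K := by
      have : 1 / s0 * lψ + eh ≤ 1 / s0 * lψ + S := by linarith
      have h2 : 1 / s0 * lψ + S ≤ D / s0 + 4 * K1 * C4 / s0 ^ 2 := hK3'.2
      have h3 : (0:ℝ) ≤ |C0| := abs_nonneg _
      simp only [hKdef]; linarith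
    have hQlo : -K ≤ 1 / s0 * lψ + eh := by
      have h1 : S + C0 ≤ eh := hlo
      have h2 : -(D / s0 + 4 * K1 * C4 / s0 ^ 2) ≤ 1 / s0 * lψ + S := hK3'.1
      have h3 : -|C0| ≤ C0 := neg_abs_le _
      simp only [hKdef]; linarith
    have hprod : (ψ j : ℝ) ^ (1 / s0) * geErr (ψ j) μ =
        Real.exp (1 / s0 * lψ + eh) := by
      rw [Real.rpow_def_of_pos hψpos, ← Real.exp_log hgpos, ← Real.exp_add]
      congr 1
      simp only [hlψdef, hehdef]
      ring
    rw [hprod]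
    exact ⟨Real.exp_le_exp.mpr hQlo, Real.exp_le_exp.mpr hQhi⟩
  -- conclude about liminf / limsup
  have h1 : ∀ᶠ j : ℕ in atTop,
      ENNReal.ofReal (Real.exp (-K)) ≤
        ENNReal.ofReal ((ψ j : ℝ) ^ (1 / s0) * geErr (ψ j) μ) :=
    key.mono fun j hj => ENNReal.ofReal_le_ofReal hj.1
  have h2 : ∀ᶠ j : ℕ in atTop,
      ENNReal.ofReal ((ψ j : ℝ) ^ (1 / s0) * geErr (ψ j) μ) ≤
        ENNReal.ofReal (Real.exp K) :=
    key.mono fun j hj => ENNReal.ofReal_le_ofReal hj.2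
  refine ⟨?_, liminf_le_limsup, ?_⟩
  · calc (0:ENNReal) < ENNReal.ofReal (Real.exp (-K)) :=
        ENNReal.ofReal_pos.mpr (Real.exp_pos _)
      _ ≤ _ := le_liminf_of_le (by isBoundedDefault) h1
  · exact lt_of_le_of_lt (limsup_le_of_le (by isBoundedDefault) h2)
      ENNReal.ofReal_lt_top
end

section
/- Let E be a Mauldin–Williams fractal with cylinders J_σ (σ admissible words), satisfying the strong separation condition d(J_{σ*j_1}, J_{σ*j_2}) ≥ t·max(|J_{σ*j_1}|, |J_{σ*j_2}|) for a fixed t ∈ (0,1), with |J_σ| = c_σ and ratios c_{ij} ∈ [c̲, c̄] ⊂ (0,1). Let μ be the Markov-type measure with μ(J_σ) = q_{σ_1} p_σ and p̄ := max p_{ij} < 1. For σ ≠ θ, let ν_σ := μ(·|J_σ) ∘ f_σ, the pull-back of the conditional measure under a similitude f_σ of ratio c_σ. Then there exist constants A_3, A_4 > 0 such that sup_{σ} sup_{x∈ℝ^q} ν_σ(B(x,ε)) ≤ A_3 ε^{A_4} for all ε > 0; one may take A_4 = log p̄ / log c̲. -/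
open MeasureTheory Finset

lemma pword_nil {N : ℕ} (P : Matrix (Fin N) (Fin N) ℝ) : pword P [] = 1 := rfl

lemma pword_single {N : ℕ} (P : Matrix (Fin N) (Fin N) ℝ) (a : Fin N) : pword P [a] = 1 := rfl

lemma pword_cons_cons {N : ℕ} (P : Matrix (Fin N) (Fin N) ℝ) (a b : Fin N) (l : List (Fin N)) :
    pword P (a :: b :: l) = P a b * pword P (b :: l) := rfl

lemma pword_pos {N : ℕ} {P Q : Matrix (Fin N) (Fin N) ℝ}
    (h : ∀ i j, 0 < P i j → 0 < Q i j) {l : List (Fin N)}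
    (hl : l.Chain' fun a b => 0 < P a b) : 0 < pword Q l := by
  induction l with
  | nil => norm_num [pword_nil]
  | cons a l ih =>
    cases l with
    | nil => norm_num [pword_single]
    | cons b l' =>
      simp only [List.Chain', List.isChain_cons_cons] at hl
      rw [pword_cons_cons]
      exact mul_pos (h _ _ hl.1) (ih hl.2)

lemma pword_append_singleton {N : ℕ} (P : Matrix (Fin N) (Fin N) ℝ) :
    ∀ (l : List (Fin N)) (h : l ≠ []) (j : Fin N),
    pword P (l ++ [j]) = pword P l * P (l.getLast h) j := by
  intro l
  induction l with
  | nil => simp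
  | cons a l ih =>
    intro _ j
    cases l with
    | nil => simp [pword_single, pword_cons_cons, pword_nil]
    | cons b l' =>
      have : (a :: b :: l') ++ [j] = a :: ((b :: l') ++ [j]) := rfl
      rw [this, List.getLast_cons (by simp)]
      have hbl : (b :: l') ++ [j] = b :: (l' ++ [j]) := rfl
      rw [hbl, pword_cons_cons, ← hbl, ih (by simp), pword_cons_cons]
      ring

lemma adm_append_singleton {N : ℕ} (P : Matrix (Fin N) (Fin N) ℝ)
    (l : List (Fin N)) (h : l ≠ []) (j : Fin N) :
    adm P (l ++ [j]) ↔ adm P l ∧ 0 < P (l.getLast h) j := by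
  constructor
  · rintro ⟨-, hch⟩
    simp only [List.Chain', List.isChain_append] at hch
    refine ⟨⟨h, hch.1⟩, ?_⟩
    exact hch.2.2 (l.getLast h) (by rw [List.getLast?_eq_getLast h]; rfl) j rfl
  · rintro ⟨⟨-, hch⟩, hpos⟩
    refine ⟨by simp, ?_⟩
    simp only [List.Chain', List.isChain_append]
    refine ⟨hch, List.isChain_singleton _, ?_⟩
    intro x hx y hy
    rw [List.getLast?_eq_getLast h] at hx
    simp at hx hy
    subst hx; subst hy; exact hpos

lemma headI_append_singleton {N : ℕ} (q : Fin N → ℝ) (l : List (Fin N)) (h : l ≠ [])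
    (j : Fin N) : ((l ++ [j]).map q).headI = (l.map q).headI := by
  cases l with
  | nil => exact absurd rfl h
  | cons a l' => rfl

lemma headI_pos {N : ℕ} (q : Fin N → ℝ) (hq : ∀ i, 0 < q i) (l : List (Fin N)) (h : l ≠ []) :
    0 < (l.map q).headI := by
  cases l with
  | nil => exact absurd rfl h
  | cons a l' => exact hq a

theorem stmt17 {E : Type*} [NormedAddCommGroup E] [NormedSpace ℝ E]
    [MeasurableSpace E] [BorelSpace E]
    {N : ℕ} (P c : Matrix (Fin N) (Fin N) ℝ)
    (hnn : ∀ i j, 0 ≤ P i j) (hrow : ∀ i, ∑ j, P i j = 1)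
    (hPlt1 : ∀ i j, 0 < P i j → P i j < 1)
    (hc : ∀ i j, 0 < P i j → 0 < c i j ∧ c i j < 1)
    (q : Fin N → ℝ) (hq : ∀ i, 0 < q i) (hq1 : ∑ i, q i = 1)
    (t δ : ℝ) (ht : 0 < t ∧ t < 1) (hδ : 0 < δ)
    (J : List (Fin N) → Set E) (f : List (Fin N) → E → E)
    (μ : Measure E) [IsProbabilityMeasure μ]
    -- cylinders are nonempty compact sets with the prescribed diameters
    (hJcpt : ∀ σ, adm P σ → IsCompact (J σ) ∧ (J σ).Nonempty)
    (hdiam : ∀ σ, adm P σ → Metric.diam (J σ) = pword c σ)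
    -- nesting of cylinders
    (hnest : ∀ σ (i : Fin N), adm P σ → adm P (σ ++ [i]) → J (σ ++ [i]) ⊆ J σ)
    -- strong separation of sibling cylinders
    (hsep : ∀ σ (j1 j2 : Fin N), adm P (σ ++ [j1]) → adm P (σ ++ [j2]) → j1 ≠ j2 →
      ∀ x ∈ J (σ ++ [j1]), ∀ y ∈ J (σ ++ [j2]),
        t * max (Metric.diam (J (σ ++ [j1]))) (Metric.diam (J (σ ++ [j2]))) ≤ dist x y)
    -- each first-order cylinder contains a ball of radius δ (|J_i| = 1 normalized)
    (hball : ∀ i : Fin N, ∃ x, Metric.closedBall x δ ⊆ J [i])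
    -- f σ is a similitude of ratio c_σ
    (hf : ∀ σ, adm P σ → ∀ x y : E, dist (f σ x) (f σ y) = pword c σ * dist x y)
    -- μ is the Markov-type measure: μ(J_σ) = q_{σ_1} p_σ
    (hμ : ∀ σ, adm P σ → μ (J σ) = ENNReal.ofReal ((σ.map q).headI * pword P σ))
    (pmax cmin : ℝ)
    (hpmax : pmax = sSup {x : ℝ | ∃ i j, 0 < P i j ∧ P i j = x})
    (hcmin : cmin = sInf {x : ℝ | ∃ i j, 0 < P i j ∧ c i j = x}) :
    ∃ A3 : ℝ, 0 < A3 ∧ 0 < Real.log pmax / Real.log cmin ∧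
      ∀ σ, adm P σ → ∀ (x : E) (ε : ℝ), 0 < ε →
        ((((μ (J σ))⁻¹ • Measure.comap (f σ) (μ.restrict (J σ)))
            (Metric.closedBall x ε)).toReal ≤
          A3 * ε ^ (Real.log pmax / Real.log cmin)) := by
  -- ### basic facts about the constants
  have hN : 0 < N := by
    by_contra h
    interval_cases N
    · simp at hq1
  have hex : ∃ i j, 0 < P i j := by
    obtain ⟨i⟩ := Fin.pos_iff_nonempty.mp hN
    by_contra h
    push_neg at h
    have h0 : ∀ j, P i j = 0 := fun j => le_antisymm (h i j) (hnn i j)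
    have h2 := hrow i
    rw [Finset.sum_congr rfl (fun j _ => h0 j)] at h2
    simp at h2
  set Sp : Set ℝ := {x : ℝ | ∃ i j, 0 < P i j ∧ P i j = x} with hSp
  set Sc : Set ℝ := {x : ℝ | ∃ i j, 0 < P i j ∧ c i j = x} with hSc
  have hSpfin : Sp.Finite := by
    apply Set.Finite.subset (Set.finite_range (fun ij : Fin N × Fin N => P ij.1 ij.2))
    rintro x ⟨i, j, -, rfl⟩; exact ⟨(i, j), rfl⟩
  have hScfin : Sc.Finite := by
    apply Set.Finite.subset (Set.finite_range (fun ij : Fin N × Fin N => c ij.1 ij.2))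
    rintro x ⟨i, j, -, rfl⟩; exact ⟨(i, j), rfl⟩
  have hSpne : Sp.Nonempty := by obtain ⟨i, j, h⟩ := hex; exact ⟨P i j, i, j, h, rfl⟩
  have hScne : Sc.Nonempty := by obtain ⟨i, j, h⟩ := hex; exact ⟨c i j, i, j, h, rfl⟩
  have hpmem : pmax ∈ Sp := hpmax ▸ hSpne.csSup_mem hSpfin
  have hcmem : cmin ∈ Sc := hcmin ▸ hScne.csInf_mem hScfin
  have hp0 : 0 < pmax := by obtain ⟨i, j, h, he⟩ := hpmem; exact he ▸ h
  have hp1 : pmax < 1 := by obtain ⟨i, j, h, he⟩ := hpmem; exact he ▸ hPlt1 i j h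
  have hcm0 : 0 < cmin := by obtain ⟨i, j, h, he⟩ := hcmem; exact he ▸ (hc i j h).1
  have hcm1 : cmin < 1 := by obtain ⟨i, j, h, he⟩ := hcmem; exact he ▸ (hc i j h).2
  have hple : ∀ i j, 0 < P i j → P i j ≤ pmax := fun i j h =>
    hpmax ▸ le_csSup hSpfin.bddAbove ⟨i, j, h, rfl⟩
  have hcle : ∀ i j, 0 < P i j → cmin ≤ c i j := fun i j h =>
    hcmin ▸ csInf_le hScfin.bddBelow ⟨i, j, h, rfl⟩
  set cbar : ℝ := sSup Sc with hcbar
  have hcbmem : cbar ∈ Sc := hScne.csSup_mem hScfin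
  have hcb0 : 0 < cbar := by obtain ⟨i, j, h, he⟩ := hcbmem; exact he ▸ (hc i j h).1
  have hcb1 : cbar < 1 := by obtain ⟨i, j, h, he⟩ := hcbmem; exact he ▸ (hc i j h).2
  have hcub : ∀ i j, 0 < P i j → c i j ≤ cbar := fun i j h =>
    le_csSup hScfin.bddAbove ⟨i, j, h, rfl⟩
  set s : ℝ := Real.log pmax / Real.log cmin with hsdef
  have hlogp : Real.log pmax < 0 := Real.log_neg hp0 hp1
  have hlogc : Real.log cmin < 0 := Real.log_neg hcm0 hcm1
  have hs : 0 < s := div_pos_of_neg_of_neg hlogp hlogc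
  have hcs : cmin ^ s = pmax := by
    rw [Real.rpow_def_of_pos hcm0, hsdef, mul_div_cancel₀ _ (ne_of_lt hlogc), Real.exp_log hp0]
  have hPc : ∀ i j, 0 < P i j → P i j ≤ (c i j) ^ s := fun i j h =>
    (hple i j h).trans (hcs ▸ Real.rpow_le_rpow hcm0.le (hcle i j h) hs.le)
  have ht0 := ht.1
  -- ### basic facts about cylinders
  have hcpos : ∀ {σ}, adm P σ → 0 < pword c σ := fun hσ =>
    pword_pos (fun i j h => (hc i j h).1) hσ.2
  have hppos : ∀ {σ}, adm P σ → 0 < pword P σ := fun hσ =>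
    pword_pos (fun _ _ h => h) hσ.2
  have hQpos : ∀ {σ}, adm P σ → 0 < (σ.map q).headI * pword P σ := fun hσ =>
    mul_pos (headI_pos q hq _ hσ.1) (hppos hσ)
  have hJmeas : ∀ σ, adm P σ → MeasurableSet (J σ) := fun σ hσ =>
    (hJcpt σ hσ).1.isClosed.measurableSet
  -- ### key descent lemma
  have key : ∀ (k : ℕ) (r : ℝ), 0 < r → ∀ (y : E) (σ : List (Fin N)), adm P σ →
      pword c σ * cbar ^ k ≤ 2 * r / (t * cmin) →
      μ (Metric.closedBall y r ∩ J σ) ≤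
        ENNReal.ofReal ((σ.map q).headI * pword P σ * (2 * r / (t * cmin * pword c σ)) ^ s) := by
    -- the "stopping" base bound
    have base : ∀ (r : ℝ), 0 < r → ∀ (y : E) (σ : List (Fin N)), adm P σ →
        t * cmin * pword c σ ≤ 2 * r →
        μ (Metric.closedBall y r ∩ J σ) ≤
          ENNReal.ofReal ((σ.map q).headI * pword P σ * (2 * r / (t * cmin * pword c σ)) ^ s) := by
      intro r hr y σ hσ hstop
      have hρ1 : (1 : ℝ) ≤ 2 * r / (t * cmin * pword c σ) :=
        (one_le_div (mul_pos (mul_pos ht0 hcm0) (hcpos hσ))).mpr hstop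
      have hρs : (1 : ℝ) ≤ (2 * r / (t * cmin * pword c σ)) ^ s :=
        Real.one_le_rpow hρ1 hs.le
      calc μ (Metric.closedBall y r ∩ J σ) ≤ μ (J σ) := measure_mono Set.inter_subset_right
        _ = ENNReal.ofReal ((σ.map q).headI * pword P σ) := hμ σ hσ
        _ ≤ _ := by
            apply ENNReal.ofReal_le_ofReal
            nlinarith [hQpos hσ]
    intro k
    induction k with
    | zero =>
      intro r hr y σ hσ hk
      apply base r hr y σ hσ
      rw [pow_zero, mul_one] at hk
      calc t * cmin * pword c σ ≤ t * cmin * (2 * r / (t * cmin)) := by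
            apply mul_le_mul_of_nonneg_left hk (by positivity)
        _ = 2 * r := by field_simp
    | succ k ih =>
      intro r hr y σ hσ hk
      by_cases hstop : t * cmin * pword c σ ≤ 2 * r
      · exact base r hr y σ hσ hstop
      push_neg at hstop
      -- descent into the (at most one) child that meets the ball
      have hσne := hσ.1
      set l := σ.getLast hσne with hl
      set A : Finset (Fin N) := Finset.univ.filter (fun j => 0 < P l j) with hA
      have hchild : ∀ j ∈ A, adm P (σ ++ [j]) := by
        intro j hj
        rw [adm_append_singleton P σ hσne j]
        exact ⟨hσ, (Finset.mem_filter.mp hj).2⟩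
      have hsumA : ∑ j ∈ A, P l j = 1 := by
        rw [hA, Finset.sum_filter_of_ne (fun x _ hx => lt_of_le_of_ne (hnn l x) (Ne.symm hx))]
        exact hrow l
      -- the union of the children has full measure in J σ
      set U : Set E := ⋃ j ∈ A, J (σ ++ [j]) with hU
      have hUsub : U ⊆ J σ := by
        refine Set.iUnion₂_subset fun j hj => hnest σ j hσ (hchild j hj)
      have hUmeas : MeasurableSet U :=
        A.measurableSet_biUnion (fun j hj => hJmeas _ (hchild j hj))
      have hdisjU : (↑A : Set (Fin N)).PairwiseDisjoint (fun j => J (σ ++ [j])) := by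
        intro j1 hj1 j2 hj2 hne
        rw [Function.onFun, Set.disjoint_left]
        intro x hx1 hx2
        have := hsep σ j1 j2 (hchild j1 hj1) (hchild j2 hj2) hne x hx1 x hx2
        rw [dist_self] at this
        have hd1 : 0 < Metric.diam (J (σ ++ [j1])) := by
          rw [hdiam _ (hchild j1 hj1)]; exact hcpos (hchild j1 hj1)
        nlinarith [le_max_left (Metric.diam (J (σ ++ [j1]))) (Metric.diam (J (σ ++ [j2])))]
      have hmuchild : ∀ j ∈ A, μ (J (σ ++ [j])) =
          ENNReal.ofReal ((σ.map q).headI * pword P σ * P l j) := by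
        intro j hj
        rw [hμ _ (hchild j hj), headI_append_singleton q σ hσne j,
          pword_append_singleton P σ hσne j, mul_assoc]
      have hUeq : μ U = μ (J σ) := by
        rw [hU, measure_biUnion_finset hdisjU (fun j hj => hJmeas _ (hchild j hj))]
        rw [Finset.sum_congr rfl hmuchild, hμ σ hσ]
        rw [← ENNReal.ofReal_sum_of_nonneg
          (fun j hj => mul_nonneg (hQpos hσ).le (hnn l j))]
        rw [← Finset.mul_sum, hsumA, mul_one]
      have hnull : μ (J σ \ U) = 0 := by
        rw [measure_diff hUsub hUmeas.nullMeasurableSet (measure_ne_top μ U), hUeq,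
          tsub_self]
      -- the ball meets at most one child
      have hsplit : μ (Metric.closedBall y r ∩ J σ) ≤
          ∑ j ∈ A, μ (Metric.closedBall y r ∩ J (σ ++ [j])) := by
        calc μ (Metric.closedBall y r ∩ J σ)
            ≤ μ ((Metric.closedBall y r ∩ U) ∪ (J σ \ U)) := by
              apply measure_mono
              intro x ⟨hx1, hx2⟩
              by_cases hxU : x ∈ U
              · exact Or.inl ⟨hx1, hxU⟩
              · exact Or.inr ⟨hx2, hxU⟩
          _ ≤ μ (Metric.closedBall y r ∩ U) + μ (J σ \ U) := measure_union_le _ _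
          _ = μ (Metric.closedBall y r ∩ U) := by rw [hnull, add_zero]
          _ = μ (⋃ j ∈ A, Metric.closedBall y r ∩ J (σ ++ [j])) := by
              rw [hU, Set.inter_iUnion₂]
          _ ≤ ∑ j ∈ A, μ (Metric.closedBall y r ∩ J (σ ++ [j])) :=
              measure_biUnion_finset_le A _
      by_cases hmeet : ∃ j0 ∈ A, (Metric.closedBall y r ∩ J (σ ++ [j0])).Nonempty
      · obtain ⟨j0, hj0A, hj0ne⟩ := hmeet
        -- all other children miss the ball
        have honly : ∀ j ∈ A, j ≠ j0 → Metric.closedBall y r ∩ J (σ ++ [j]) = ∅ := by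
          intro j hj hne
          rw [Set.eq_empty_iff_forall_notMem]
          rintro x ⟨hxB, hxJ⟩
          obtain ⟨z, hzB, hzJ⟩ := hj0ne
          have hd := hsep σ j j0 (hchild j hj) (hchild j0 hj0A) hne x hxJ z hzJ
          have hdiam0 : pword c σ * cmin ≤ Metric.diam (J (σ ++ [j0])) := by
            rw [hdiam _ (hchild j0 hj0A), pword_append_singleton c σ hσne j0]
            exact mul_le_mul_of_nonneg_left (hcle l j0 (Finset.mem_filter.mp hj0A).2)
              (hcpos hσ).le
          have hmax : pword c σ * cmin ≤
              max (Metric.diam (J (σ ++ [j]))) (Metric.diam (J (σ ++ [j0]))) :=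
            hdiam0.trans (le_max_right _ _)
          have hxz : dist x z ≤ 2 * r := by
            calc dist x z ≤ dist x y + dist y z := dist_triangle x y z
              _ ≤ r + r := add_le_add (Metric.mem_closedBall.mp hxB)
                  (dist_comm y z ▸ Metric.mem_closedBall.mp hzB)
              _ = 2 * r := by ring
          nlinarith [mul_le_mul_of_nonneg_left hmax ht0.le]
        have hone : ∑ j ∈ A, μ (Metric.closedBall y r ∩ J (σ ++ [j])) =
            μ (Metric.closedBall y r ∩ J (σ ++ [j0])) := by
          apply Finset.sum_eq_single_of_mem j0 hj0A
          intro b hb hbne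
          rw [honly b hb hbne, measure_empty]
        -- apply induction hypothesis to the child
        have hj0pos : 0 < P l j0 := (Finset.mem_filter.mp hj0A).2
        have hcj0 : 0 < c l j0 := (hc l j0 hj0pos).1
        have hcc : pword c (σ ++ [j0]) = pword c σ * c l j0 :=
          pword_append_singleton c σ hσne j0
        have hkc : pword c (σ ++ [j0]) * cbar ^ k ≤ 2 * r / (t * cmin) := by
          rw [hcc]
          calc pword c σ * c l j0 * cbar ^ k ≤ pword c σ * cbar * cbar ^ k := by
                apply mul_le_mul_of_nonneg_right _ (by positivity)
                exact mul_le_mul_of_nonneg_left (hcub l j0 hj0pos) (hcpos hσ).le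
            _ = pword c σ * cbar ^ (k + 1) := by ring
            _ ≤ 2 * r / (t * cmin) := hk
        have hih := ih r hr y (σ ++ [j0]) (hchild j0 hj0A) hkc
        refine hsplit.trans (hone.le.trans (hih.trans (ENNReal.ofReal_le_ofReal ?_)))
        -- the crucial real inequality
        rw [headI_append_singleton q σ hσne j0, pword_append_singleton P σ hσne j0, hcc,
          ← mul_assoc]
        set Q := (σ.map q).headI * pword P σ with hQ
        have hQp : 0 < Q := hQpos hσ
        set ρ := 2 * r / (t * cmin * pword c σ) with hρ
        have hρpos : 0 < ρ :=
          div_pos (by linarith) (mul_pos (mul_pos ht0 hcm0) (hcpos hσ))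
        have hrw : 2 * r / (t * cmin * (pword c σ * c l j0)) = ρ / c l j0 := by
          rw [hρ, div_div]; congr 1; ring
        rw [hrw, Real.div_rpow hρpos.le hcj0.le]
        have hPle : P l j0 ≤ (c l j0) ^ s := hPc l j0 hj0pos
        have hcspos : 0 < (c l j0) ^ s := Real.rpow_pos_of_pos hcj0 s
        have hρs : 0 ≤ ρ ^ s := Real.rpow_nonneg hρpos.le s
        calc Q * P l j0 * (ρ ^ s / (c l j0) ^ s)
            ≤ Q * (c l j0) ^ s * (ρ ^ s / (c l j0) ^ s) := by
              apply mul_le_mul_of_nonneg_right _ (by positivity)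
              exact mul_le_mul_of_nonneg_left hPle hQp.le
          _ = Q * ρ ^ s := by
              rw [mul_assoc, mul_comm ((c l j0) ^ s), div_mul_cancel₀ _ (ne_of_gt hcspos)]
      · -- no child meets the ball
        push_neg at hmeet
        have : ∑ j ∈ A, μ (Metric.closedBall y r ∩ J (σ ++ [j])) = 0 := by
          apply Finset.sum_eq_zero
          intro j hj
          rw [hmeet j hj, measure_empty]
        exact (hsplit.trans this.le).trans zero_le
  -- ### conclusion
  refine ⟨(2 / (t * cmin)) ^ s, Real.rpow_pos_of_pos (by positivity) s, hs, ?_⟩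
  intro σ hσ x ε hε
  set A3 : ℝ := (2 / (t * cmin)) ^ s with hA3
  have hA3nn : 0 ≤ A3 * ε ^ s := by positivity
  by_cases hcm : Function.Injective (f σ) ∧
      ∀ s', MeasurableSet s' → NullMeasurableSet (f σ '' s') (μ.restrict (J σ))
  · -- the pull-back is genuinely defined
    have hcσ : 0 < pword c σ := hcpos hσ
    have hQp : 0 < (σ.map q).headI * pword P σ := hQpos hσ
    have hcomap := Measure.comap_apply₀ (f σ) (μ.restrict (J σ)) hcm.1 hcm.2
      (measurableSet_closedBall (x := x) (ε := ε)).nullMeasurableSet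
    have himg : f σ '' Metric.closedBall x ε ⊆ Metric.closedBall (f σ x) (pword c σ * ε) := by
      rintro _ ⟨w, hw, rfl⟩
      rw [Metric.mem_closedBall, hf σ hσ w x]
      exact mul_le_mul_of_nonneg_left (Metric.mem_closedBall.mp hw) hcσ.le
    have hrpos : 0 < pword c σ * ε := mul_pos hcσ hε
    have h1 : Measure.comap (f σ) (μ.restrict (J σ)) (Metric.closedBall x ε)
        ≤ μ (Metric.closedBall (f σ x) (pword c σ * ε) ∩ J σ) := by
      rw [hcomap]
      calc μ.restrict (J σ) (f σ '' Metric.closedBall x ε)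
          ≤ μ.restrict (J σ) (Metric.closedBall (f σ x) (pword c σ * ε)) := measure_mono himg
        _ = μ (Metric.closedBall (f σ x) (pword c σ * ε) ∩ J σ) :=
            Measure.restrict_apply measurableSet_closedBall
    obtain ⟨k, hk⟩ := exists_pow_lt_of_lt_one
      (show 0 < (2 * (pword c σ * ε) / (t * cmin)) / pword c σ by positivity) hcb1
    have hkc : pword c σ * cbar ^ k ≤ 2 * (pword c σ * ε) / (t * cmin) := by
      calc pword c σ * cbar ^ k
          ≤ pword c σ * ((2 * (pword c σ * ε) / (t * cmin)) / pword c σ) :=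
            mul_le_mul_of_nonneg_left hk.le hcσ.le
        _ = 2 * (pword c σ * ε) / (t * cmin) := by
            rw [mul_comm, div_mul_cancel₀ _ (ne_of_gt hcσ)]
    have hkey := key k (pword c σ * ε) hrpos (f σ x) σ hσ hkc
    have hsimp : 2 * (pword c σ * ε) / (t * cmin * pword c σ) = 2 / (t * cmin) * ε := by
      field_simp
    rw [hsimp] at hkey
    have hmulrpow : (2 / (t * cmin) * ε) ^ s = A3 * ε ^ s :=
      Real.mul_rpow (by positivity) hε.le
    rw [hmulrpow] at hkey
    have h2 : μ (Metric.closedBall (f σ x) (pword c σ * ε) ∩ J σ) ≤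
        ENNReal.ofReal ((σ.map q).headI * pword P σ * (A3 * ε ^ s)) := by
      rw [← mul_assoc] at hkey ⊢
      exact hkey
    -- assemble
    have h3 : ((μ (J σ))⁻¹ • Measure.comap (f σ) (μ.restrict (J σ)))
        (Metric.closedBall x ε) ≤ ENNReal.ofReal (A3 * ε ^ s) := by
      rw [Measure.smul_apply, smul_eq_mul, hμ σ hσ]
      calc (ENNReal.ofReal ((σ.map q).headI * pword P σ))⁻¹ *
            Measure.comap (f σ) (μ.restrict (J σ)) (Metric.closedBall x ε)
          ≤ (ENNReal.ofReal ((σ.map q).headI * pword P σ))⁻¹ *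
            ENNReal.ofReal ((σ.map q).headI * pword P σ * (A3 * ε ^ s)) :=
            mul_le_mul_right (h1.trans h2) _
        _ = ENNReal.ofReal (A3 * ε ^ s) := by
            rw [← ENNReal.ofReal_inv_of_pos hQp,
              ← ENNReal.ofReal_mul (by positivity), ← mul_assoc,
              inv_mul_cancel₀ (ne_of_gt hQp), one_mul]
    calc (((μ (J σ))⁻¹ • Measure.comap (f σ) (μ.restrict (J σ)))
          (Metric.closedBall x ε)).toReal
        ≤ (ENNReal.ofReal (A3 * ε ^ s)).toReal :=
          ENNReal.toReal_mono ENNReal.ofReal_ne_top h3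
      _ = A3 * ε ^ s := ENNReal.toReal_ofReal hA3nn
  · -- degenerate case: the pull-back is the zero measure
    have h0 : Measure.comap (f σ) (μ.restrict (J σ)) = 0 := by
      rw [Measure.comap, dif_neg hcm]
    rw [Measure.smul_apply, h0]
    simpa using hA3nn
end
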